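/- arXiv:2411.01314 — 6 statements merged into one kernel-verified Lean document; each statement's English description precedes it below -/
import Mathlib

section
/- For any simple graph G, the chromatic index χ'(G) satisfies Δ(G) ≤ χ'(G) ≤ Δ(G) + 1, where Δ(G) is the maximum degree of G. -/
set_option linter.unusedSectionVars false

namespace Vz

variable {V : Type*} [DecidableEq V]

def Proper {κ : Type*} (c : Sym2 V → κ) (S : Finset (Sym2 V)) : Prop :=
  ∀ e₁ ∈ S, ∀ e₂ ∈ S, e₁ ≠ e₂ → (∃ v, v ∈ e₁ ∧ v ∈ e₂) → c e₁ ≠ c e₂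

def Miss {κ : Type*} (c : Sym2 V → κ) (S : Finset (Sym2 V)) (v : V) (a : κ) : Prop :=
  ∀ e ∈ S, v ∈ e → c e ≠ a

lemma exists_miss {D : ℕ} (c : Sym2 V → Fin (D+1)) (S : Finset (Sym2 V)) (v : V)
    (h : (S.filter (fun e => v ∈ e)).card ≤ D) : ∃ a, Miss c S v a := by
  set T := (S.filter (fun e => v ∈ e)).image c with hT
  have h2 : T.card < D + 1 := lt_of_le_of_lt (Finset.card_image_le.trans h) (Nat.lt_succ_self D)
  obtain ⟨a, ha⟩ : ∃ a, a ∉ T := by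
    by_contra hcon
    push_neg at hcon
    have : (Finset.univ : Finset (Fin (D+1))) ⊆ T := fun x _ => hcon x
    have := Finset.card_le_card this
    simp at this
    omega
  exact ⟨a, fun e he hve hc => ha (Finset.mem_image.2 ⟨e, Finset.mem_filter.2 ⟨he, hve⟩, hc⟩)⟩

/-! ## Kempe chain swaps -/

section Swap

variable {N : ℕ} (c : Sym2 V → Fin N) (S : Finset (Sym2 V)) (α β : Fin N) (w : V)

/-- the subgraph of `α`/`β`-colored edges -/
def Hg : SimpleGraph V where
  Adj u v := u ≠ v ∧ s(u,v) ∈ S ∧ (c s(u,v) = α ∨ c s(u,v) = β)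
  symm := ⟨fun u v h => ⟨h.1.symm, by rw [Sym2.eq_swap]; exact h.2.1,
    by rw [Sym2.eq_swap]; exact h.2.2⟩⟩
  loopless := ⟨fun v h => h.1 rfl⟩

def Swapped (e : Sym2 V) : Prop :=
  e ∈ S ∧ (c e = α ∨ c e = β) ∧ ∃ u ∈ e, (Hg c S α β).Reachable w u

open Classical in
noncomputable def swap : Sym2 V → Fin N :=
  fun e => if Swapped c S α β w e then (if c e = α then β else α) else c e

variable {c S α β w}

lemma swap_eq_of_not (e : Sym2 V) (h : ¬ Swapped c S α β w e) : swap c S α β w e = c e := by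
  simp [swap, h]

lemma swap_mem_pair (e : Sym2 V) (h : Swapped c S α β w e) :
    swap c S α β w e = α ∨ swap c S α β w e = β := by
  classical
  rcases h.2.1 with h1 | h1 <;> simp [swap, h, h1]

lemma swap_eq_of_alpha (e : Sym2 V) (h : Swapped c S α β w e) (h1 : c e = α) :
    swap c S α β w e = β := by classical simp [swap, h, h1]

lemma swap_eq_of_beta (e : Sym2 V) (hab : α ≠ β) (h : Swapped c S α β w e) (h1 : c e = β) :
    swap c S α β w e = α := by
  classical
  have : ¬ (c e = α) := by rw [h1]; exact fun hh => hab hh.symm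
  simp [swap, h, this]

/-- reachability propagates to the other endpoint of a colored edge -/
lemma reach_other {e : Sym2 V} (he : e ∈ S) (hcol : c e = α ∨ c e = β) {u v : V}
    (hu : u ∈ e) (hv : v ∈ e) (hr : (Hg c S α β).Reachable w v) :
    (Hg c S α β).Reachable w u := by
  rcases eq_or_ne u v with rfl | hne
  · exact hr
  · have hee : e = s(u, v) := (Sym2.mem_and_mem_iff hne).1 ⟨hu, hv⟩
    have hadj : (Hg c S α β).Adj v u := by
      refine ⟨hne.symm, ?_, ?_⟩ <;> rw [Sym2.eq_swap, ← hee]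
      · exact he
      · exact hcol
    exact hr.trans hadj.reachable

lemma swapped_of_mem {e : Sym2 V} (he : e ∈ S) (hcol : c e = α ∨ c e = β) {v : V}
    (hv : v ∈ e) (hr : (Hg c S α β).Reachable w v) : Swapped c S α β w e :=
  ⟨he, hcol, v, hv, hr⟩

lemma swap_proper (hc : Proper c S) (hab : α ≠ β) : Proper (swap c S α β w) S := by
  intro e₁ he₁ e₂ he₂ hne hshare
  obtain ⟨v, hv₁, hv₂⟩ := hshare
  have key : ∀ p q : Sym2 V, p ∈ S → q ∈ S → p ≠ q → v ∈ p → v ∈ q →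
      Swapped c S α β w p → ¬ Swapped c S α β w q → swap c S α β w p ≠ swap c S α β w q := by
    intro p q hp hq hpq hvp hvq hsp hsq
    rw [swap_eq_of_not q hsq]
    intro hcon
    rcases swap_mem_pair p hsp with h | h
    · rw [h] at hcon
      refine hsq (swapped_of_mem hq (Or.inl hcon.symm) hvq ?_)
      obtain ⟨u, hu, hru⟩ := hsp.2.2
      exact reach_other hp hsp.2.1 hvp hu hru
    · rw [h] at hcon
      refine hsq (swapped_of_mem hq (Or.inr hcon.symm) hvq ?_)
      obtain ⟨u, hu, hru⟩ := hsp.2.2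
      exact reach_other hp hsp.2.1 hvp hu hru
  by_cases h1 : Swapped c S α β w e₁ <;> by_cases h2 : Swapped c S α β w e₂
  · -- both swapped
    have hcc := hc e₁ he₁ e₂ he₂ hne ⟨v, hv₁, hv₂⟩
    rcases h1.2.1 with ha1 | ha1 <;> rcases h2.2.1 with ha2 | ha2
    · exact absurd (ha1.trans ha2.symm) hcc
    · rw [swap_eq_of_alpha e₁ h1 ha1, swap_eq_of_beta e₂ hab h2 ha2]
      exact fun h => hab h.symm
    · rw [swap_eq_of_beta e₁ hab h1 ha1, swap_eq_of_alpha e₂ h2 ha2]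
      exact hab
    · exact absurd (ha1.trans ha2.symm) hcc
  · exact key e₁ e₂ he₁ he₂ hne hv₁ hv₂ h1 h2
  · exact (key e₂ e₁ he₂ he₁ hne.symm hv₂ hv₁ h2 h1).symm
  · rw [swap_eq_of_not e₁ h1, swap_eq_of_not e₂ h2]
    exact hc e₁ he₁ e₂ he₂ hne ⟨v, hv₁, hv₂⟩

/-- L1 : colors other than α,β stay missing -/
lemma swap_miss_other {γ : Fin N} (hγa : γ ≠ α) (hγb : γ ≠ β) {v : V}
    (h : Miss c S v γ) : Miss (swap c S α β w) S v γ := by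
  intro e he hv
  by_cases hs : Swapped c S α β w e
  · rcases swap_mem_pair e hs with h' | h' <;> rw [h']
    · exact fun hh => hγa hh.symm
    · exact fun hh => hγb hh.symm
  · rw [swap_eq_of_not e hs]; exact h e he hv

/-- L2 : if β missing at a reachable v, then α missing after the swap -/
lemma swap_miss_beta (hab : α ≠ β) {v : V} (h : Miss c S v β)
    (hr : (Hg c S α β).Reachable w v) : Miss (swap c S α β w) S v α := by
  intro e he hv
  by_cases hs : Swapped c S α β w e
  · rcases hs.2.1 with h' | h'
    · rw [swap_eq_of_alpha e hs h']; exact fun hh => hab hh.symm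
    · exact absurd h' (h e he hv)
  · rw [swap_eq_of_not e hs]
    intro hcon
    exact hs (swapped_of_mem he (Or.inl hcon) hv hr)

/-- L2' : if α missing at a reachable v, then β missing after the swap -/
lemma swap_miss_alpha (hab : α ≠ β) {v : V} (h : Miss c S v α)
    (hr : (Hg c S α β).Reachable w v) : Miss (swap c S α β w) S v β := by
  intro e he hv
  by_cases hs : Swapped c S α β w e
  · rcases hs.2.1 with h' | h'
    · exact absurd h' (h e he hv)
    · rw [swap_eq_of_beta e hab hs h']; exact hab
  · rw [swap_eq_of_not e hs]
    intro hcon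
    exact hs (swapped_of_mem he (Or.inr hcon) hv hr)

/-- L3 : edges at an unreachable vertex are unchanged -/
lemma swap_eq_at_unreachable {v : V} (hr : ¬ (Hg c S α β).Reachable w v)
    {e : Sym2 V} (he : e ∈ S) (hv : v ∈ e) : swap c S α β w e = c e := by
  apply swap_eq_of_not
  intro hs
  obtain ⟨u, hu, hru⟩ := hs.2.2
  exact hr (reach_other he hs.2.1 hv hu hru)

lemma swap_miss_unreachable {v : V} (hr : ¬ (Hg c S α β).Reachable w v)
    {γ : Fin N} (h : Miss c S v γ) : Miss (swap c S α β w) S v γ := by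
  intro e he hv
  rw [swap_eq_at_unreachable hr he hv]
  exact h e he hv

/-- vertices missing α or β have at most one neighbor in `Hg` -/
lemma H_deg_one (hc : Proper c S) {v : V} (h : Miss c S v α ∨ Miss c S v β) :
    ∀ s t : V, (Hg c S α β).Adj v s → (Hg c S α β).Adj v t → s = t := by
  intro s t hs ht
  by_contra hne
  have he : s(v,s) ≠ s(v,t) := fun hh => hne (Sym2.congr_right.1 hh)
  have := hc s(v,s) hs.2.1 s(v,t) ht.2.1 he ⟨v, by simp, by simp⟩
  rcases h with h | h
  · have h1 := h s(v,s) hs.2.1 (by simp)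
    have h2 := h s(v,t) ht.2.1 (by simp)
    rcases hs.2.2 with h3 | h3 <;> rcases ht.2.2 with h4 | h4 <;> simp_all
  · have h1 := h s(v,s) hs.2.1 (by simp)
    have h2 := h s(v,t) ht.2.1 (by simp)
    rcases hs.2.2 with h3 | h3 <;> rcases ht.2.2 with h4 | h4 <;> simp_all

/-- every vertex has at most two neighbors in `Hg` -/
lemma H_deg_two (hc : Proper c S) :
    ∀ v s t u : V, (Hg c S α β).Adj v s → (Hg c S α β).Adj v t → (Hg c S α β).Adj v u →
      s = t ∨ s = u ∨ t = u := by
  intro v s t u hs ht hu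
  by_contra hne
  push_neg at hne
  obtain ⟨h1, h2, h3⟩ := hne
  have e1 : s(v,s) ≠ s(v,t) := fun hh => h1 (Sym2.congr_right.1 hh)
  have e2 : s(v,s) ≠ s(v,u) := fun hh => h2 (Sym2.congr_right.1 hh)
  have e3 : s(v,t) ≠ s(v,u) := fun hh => h3 (Sym2.congr_right.1 hh)
  have c1 := hc s(v,s) hs.2.1 s(v,t) ht.2.1 e1 ⟨v, by simp, by simp⟩
  have c2 := hc s(v,s) hs.2.1 s(v,u) hu.2.1 e2 ⟨v, by simp, by simp⟩
  have c3 := hc s(v,t) ht.2.1 s(v,u) hu.2.1 e3 ⟨v, by simp, by simp⟩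
  rcases hs.2.2 with h | h <;> rcases ht.2.2 with h' | h' <;> rcases hu.2.2 with h'' | h'' <;>
    simp_all

end Swap

/-! ## Paths in a max-degree-2 graph -/

section Paths

variable {H : SimpleGraph V}

/-- an interior vertex of a path has two distinct neighbors on the path -/
lemma internal_two {w a : V} (p : H.Walk w a) (hp : p.IsPath) {u : V}
    (hu : u ∈ p.support) (hw : u ≠ w) (ha : u ≠ a) :
    ∃ s t, s ≠ t ∧ s ∈ p.support ∧ t ∈ p.support ∧ H.Adj u s ∧ H.Adj u t := by
  induction p with
  | nil => simp at hu; exact absurd hu hw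
  | @cons w v a h q ih =>
    rw [SimpleGraph.Walk.support_cons] at hu
    rcases List.mem_cons.1 hu with rfl | hu'
    · exact absurd rfl hw
    · rcases eq_or_ne u v with rfl | huv
      · -- u = v is the second vertex; it's interior so q is nonnil
        cases q with
        | nil => exact absurd rfl ha
        | @cons _ v' _ h' q' =>
          refine ⟨w, v', ?_, ?_, ?_, h.symm, h'⟩
          · rintro rfl
            have : w ∉ (SimpleGraph.Walk.cons h' q').support :=
              (SimpleGraph.Walk.cons_isPath_iff h _).1 hp |>.2
            exact this (by simp)
          · simp
          · simp
      · obtain ⟨s, t, hst, hs, ht, has, hat⟩ :=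
          ih ((SimpleGraph.Walk.cons_isPath_iff h q).1 hp).1 hu' huv ha
        exact ⟨s, t, hst, by simp [hs], by simp [ht], has, hat⟩

lemma endpoint_one {w a : V} (p : H.Walk w a) (hne : w ≠ a) :
    ∃ s, s ∈ p.support ∧ H.Adj w s := by
  cases p with
  | nil => exact absurd rfl hne
  | @cons _ v _ h q => exact ⟨v, by simp, h⟩

/-- in a graph of max degree ≤ 2 whose endpoints have degree ≤ 1,
the support of a path is closed under adjacency -/
lemma support_closed {w a : V}
    (hdeg2 : ∀ v s t u : V, H.Adj v s → H.Adj v t → H.Adj v u → s = t ∨ s = u ∨ t = u)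
    (hw1 : ∀ s t, H.Adj w s → H.Adj w t → s = t)
    (ha1 : ∀ s t, H.Adj a s → H.Adj a t → s = t)
    (p : H.Walk w a) (hp : p.IsPath) (hne : w ≠ a) :
    ∀ u u', u ∈ p.support → H.Adj u u' → u' ∈ p.support := by
  intro u u' hu hadj
  by_contra hnot
  rcases eq_or_ne u w with rfl | huw
  · obtain ⟨s, hs, has⟩ := endpoint_one p hne
    exact hnot ((hw1 u' s hadj has) ▸ hs)
  rcases eq_or_ne u a with rfl | hua
  · obtain ⟨s, hs, has⟩ := endpoint_one p.reverse hne.symm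
    rw [SimpleGraph.Walk.support_reverse, List.mem_reverse] at hs
    exact hnot ((ha1 u' s hadj has) ▸ hs)
  obtain ⟨s, t, hst, hs, ht, has, hat⟩ := internal_two p hp hu huw hua
  rcases hdeg2 u s t u' has hat hadj with h | h | h
  · exact hst h
  · exact hnot (h ▸ hs)
  · exact hnot (h ▸ ht)

lemma reach_subset_support {w a : V}
    (hdeg2 : ∀ v s t u : V, H.Adj v s → H.Adj v t → H.Adj v u → s = t ∨ s = u ∨ t = u)
    (hw1 : ∀ s t, H.Adj w s → H.Adj w t → s = t)
    (ha1 : ∀ s t, H.Adj a s → H.Adj a t → s = t)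
    (p : H.Walk w a) (hp : p.IsPath) (hne : w ≠ a) :
    ∀ u, H.Reachable w u → u ∈ p.support := by
  have key : ∀ {x u : V} (q : H.Walk x u), x ∈ p.support → u ∈ p.support := by
    intro x u q
    induction q with
    | nil => exact id
    | cons h q ih => exact fun hx => ih (support_closed hdeg2 hw1 ha1 p hp hne _ _ hx h)
  intro u hr
  obtain ⟨q⟩ := hr
  exact key q p.start_mem_support

/-- a connected component of a max-degree-2 graph cannot contain three vertices of degree ≤ 1 -/
lemma three_leaves
    (hdeg2 : ∀ v s t u : V, H.Adj v s → H.Adj v t → H.Adj v u → s = t ∨ s = u ∨ t = u)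
    {w a b : V} (hwa : w ≠ a) (hwb : w ≠ b) (hab : a ≠ b)
    (hw1 : ∀ s t, H.Adj w s → H.Adj w t → s = t)
    (ha1 : ∀ s t, H.Adj a s → H.Adj a t → s = t)
    (hb1 : ∀ s t, H.Adj b s → H.Adj b t → s = t)
    (hra : H.Reachable w a) (hrb : H.Reachable w b) : False := by
  obtain ⟨q⟩ := hra
  let p := q.toPath
  have hb : b ∈ (p : H.Walk w a).support :=
    reach_subset_support hdeg2 hw1 ha1 p p.2 hwa b hrb
  obtain ⟨s, t, hst, _, _, has, hat⟩ := internal_two (p : H.Walk w a) p.2 hb hwb.symm hab.symm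
  exact hst (hb1 s t has hat)

end Paths

/-! ## Fan rotation -/

lemma rotate {N : ℕ} (ES : Finset (Sym2 V)) (x : V) (f : ℕ → V) (c : Sym2 V → Fin N) (m : ℕ)
    (hadj : ∀ i ≤ m, s(x, f i) ∈ ES)
    (hfx : ∀ i ≤ m, f i ≠ x)
    (hinj : ∀ i ≤ m, ∀ j ≤ m, f i = f j → i = j)
    (hc : Proper c (ES.erase s(x, f 0)))
    (hmiss : ∀ i < m, Miss c (ES.erase s(x, f 0)) (f i) (c s(x, f (i+1)))) :
    ∀ m' ≤ m, ∃ c' : Sym2 V → Fin N,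
      Proper c' (ES.erase s(x, f m')) ∧
      (∀ e, (∀ i ≤ m', e ≠ s(x, f i)) → c' e = c e) ∧
      (∀ i < m', c' s(x, f i) = c s(x, f (i+1))) := by
  intro m'
  induction m' with
  | zero =>
    intro _
    exact ⟨c, hc, fun e _ => rfl, fun i hi => absurd hi (Nat.not_lt_zero i)⟩
  | succ n ih =>
    intro hn1
    obtain ⟨c', h1, h2, h3⟩ := ih (by omega)
    have hkey : ∀ i ≤ m, ∀ j ≤ m, s(x, f i) = s(x, f j) → i = j := fun i hi j hj hh =>
      hinj i hi j hj (Sym2.congr_right.1 hh)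
    have hne_en : s(x, f n) ≠ s(x, f (n+1)) := fun hh => by
      have := hkey n (by omega) (n+1) (by omega) hh; omega
    have hc'en1 : c' s(x, f (n+1)) = c s(x, f (n+1)) := by
      apply h2
      intro i hi hh
      have := hkey (n+1) (by omega) i (by omega) hh
      omega
    refine ⟨Function.update c' s(x, f n) (c s(x, f (n+1))), ?_, ?_, ?_⟩
    · -- properness
      have aux : ∀ e₂ ∈ ES.erase s(x, f (n+1)), e₂ ≠ s(x, f n) → (x ∈ e₂ ∨ f n ∈ e₂) →
          Function.update c' s(x, f n) (c s(x, f (n+1))) s(x, f n) ≠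
          Function.update c' s(x, f n) (c s(x, f (n+1))) e₂ := by
        intro e₂ he₂ hne2 hsh
        rw [Function.update_self, Function.update_of_ne hne2]
        rcases hsh with hx2 | hf2
        · have hm1 : e₂ ∈ ES.erase s(x, f n) :=
            Finset.mem_erase.2 ⟨hne2, Finset.mem_of_mem_erase he₂⟩
          have hm2 : s(x, f (n+1)) ∈ ES.erase s(x, f n) :=
            Finset.mem_erase.2 ⟨hne_en.symm, hadj (n+1) (by omega)⟩
          have := h1 e₂ hm1 s(x, f (n+1)) hm2 (Finset.ne_of_mem_erase he₂)
            ⟨x, hx2, by simp⟩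
          rw [hc'en1] at this
          exact fun hh => this hh.symm
        · by_cases hx2 : x ∈ e₂
          · have hm1 : e₂ ∈ ES.erase s(x, f n) :=
              Finset.mem_erase.2 ⟨hne2, Finset.mem_of_mem_erase he₂⟩
            have hm2 : s(x, f (n+1)) ∈ ES.erase s(x, f n) :=
              Finset.mem_erase.2 ⟨hne_en.symm, hadj (n+1) (by omega)⟩
            have := h1 e₂ hm1 s(x, f (n+1)) hm2 (Finset.ne_of_mem_erase he₂)
              ⟨x, hx2, by simp⟩
            rw [hc'en1] at this
            exact fun hh => this hh.symm
          · have he2c : c' e₂ = c e₂ := by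
              apply h2
              intro i _ hh
              rw [hh] at hx2
              exact hx2 (by simp)
            rw [he2c]
            have he2S : e₂ ∈ ES.erase s(x, f 0) := by
              refine Finset.mem_erase.2 ⟨?_, Finset.mem_of_mem_erase he₂⟩
              intro hh
              rw [hh] at hx2
              exact hx2 (by simp)
            have := hmiss n (by omega) e₂ he2S hf2
            exact fun hh => this hh.symm
      intro e₁ he₁ e₂ he₂ hne hsh
      obtain ⟨v, hv1, hv2⟩ := hsh
      rcases eq_or_ne e₁ s(x, f n) with rfl | hne1
      · apply aux e₂ he₂ (fun hh => hne hh.symm)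
        rcases Sym2.mem_iff.1 hv1 with rfl | rfl
        · exact Or.inl hv2
        · exact Or.inr hv2
      rcases eq_or_ne e₂ s(x, f n) with rfl | hne2
      · refine (aux e₁ he₁ hne1 ?_).symm
        rcases Sym2.mem_iff.1 hv2 with rfl | rfl
        · exact Or.inl hv1
        · exact Or.inr hv1
      · rw [Function.update_of_ne hne1, Function.update_of_ne hne2]
        exact h1 e₁ (Finset.mem_erase.2 ⟨hne1, Finset.mem_of_mem_erase he₁⟩)
          e₂ (Finset.mem_erase.2 ⟨hne2, Finset.mem_of_mem_erase he₂⟩) hne ⟨v, hv1, hv2⟩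
    · intro e he
      rw [Function.update_of_ne (he n (by omega))]
      exact h2 e (fun i hi => he i (by omega))
    · intro i hi
      rcases eq_or_ne i n with rfl | hin
      · rw [Function.update_self]
      · have : s(x, f i) ≠ s(x, f n) := fun hh => hin (hkey i (by omega) n (by omega) hh)
        rw [Function.update_of_ne this]
        exact h3 i (by omega)

lemma rotate_full {N : ℕ} (ES : Finset (Sym2 V)) (x : V) (f : ℕ → V) (c : Sym2 V → Fin N)
    (m : ℕ)
    (hadj : ∀ i ≤ m, s(x, f i) ∈ ES)
    (hfx : ∀ i ≤ m, f i ≠ x)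
    (hinj : ∀ i ≤ m, ∀ j ≤ m, f i = f j → i = j)
    (hc : Proper c (ES.erase s(x, f 0)))
    (hmiss : ∀ i < m, Miss c (ES.erase s(x, f 0)) (f i) (c s(x, f (i+1)))) :
    ∃ c' : Sym2 V → Fin N,
      Proper c' (ES.erase s(x, f m)) ∧
      (∀ a, Miss c (ES.erase s(x, f 0)) x a → Miss c' (ES.erase s(x, f m)) x a) ∧
      (∀ a, Miss c (ES.erase s(x, f 0)) (f m) a → Miss c' (ES.erase s(x, f m)) (f m) a) := by
  obtain ⟨c', h1, h2, h3⟩ := rotate ES x f c m hadj hfx hinj hc hmiss m le_rfl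
  have hkey : ∀ i ≤ m, ∀ j ≤ m, s(x, f i) = s(x, f j) → i = j := fun i hi j hj hh =>
    hinj i hi j hj (Sym2.congr_right.1 hh)
  refine ⟨c', h1, ?_, ?_⟩
  · intro a ha e he hve hcon
    by_cases hex : ∃ i ≤ m, e = s(x, f i)
    · obtain ⟨i, hi, rfl⟩ := hex
      have him : i ≠ m := fun hh => (Finset.mem_erase.1 he).1 (by rw [hh])
      have hlt : i < m := by omega
      rw [h3 i hlt] at hcon
      refine ha s(x, f (i+1)) ?_ (by simp) hcon
      refine Finset.mem_erase.2 ⟨?_, hadj (i+1) (by omega)⟩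
      intro hh
      have := hkey (i+1) (by omega) 0 (by omega) hh
      omega
    · push_neg at hex
      rw [h2 e (fun i hi => hex i hi)] at hcon
      refine ha e ?_ hve hcon
      exact Finset.mem_erase.2 ⟨hex 0 (by omega), Finset.mem_of_mem_erase he⟩
  · intro a ha e he hve hcon
    by_cases hx2 : x ∈ e
    · have : e = s(x, f m) := (Sym2.mem_and_mem_iff (hfx m le_rfl).symm).1 ⟨hx2, hve⟩
      exact (Finset.mem_erase.1 he).1 this
    · have hagree : c' e = c e := by
        apply h2
        intro i _ hh
        rw [hh] at hx2
        exact hx2 (by simp)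
      rw [hagree] at hcon
      refine ha e ?_ hve hcon
      refine Finset.mem_erase.2 ⟨?_, Finset.mem_of_mem_erase he⟩
      intro hh
      rw [hh] at hx2
      exact hx2 (by simp)

/-- coloring the final uncolored edge -/
lemma finish {N : ℕ} (ES : Finset (Sym2 V)) (x z : V) (hxz : x ≠ z) (hz : s(x,z) ∈ ES)
    (c' : Sym2 V → Fin N) (hp : Proper c' (ES.erase s(x,z))) (γ : Fin N)
    (hmx : Miss c' (ES.erase s(x,z)) x γ) (hmz : Miss c' (ES.erase s(x,z)) z γ) :
    ∃ c'' : Sym2 V → Fin N, Proper c'' ES := by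
  refine ⟨Function.update c' s(x,z) γ, ?_⟩
  have aux : ∀ e₂ ∈ ES, e₂ ≠ s(x,z) → (∃ v, v ∈ s(x,z) ∧ v ∈ e₂) →
      Function.update c' s(x,z) γ s(x,z) ≠ Function.update c' s(x,z) γ e₂ := by
    intro e₂ he₂ hne2 ⟨v, hv1, hv2⟩
    rw [Function.update_self, Function.update_of_ne hne2]
    have he2m : e₂ ∈ ES.erase s(x,z) := Finset.mem_erase.2 ⟨hne2, he₂⟩
    rcases Sym2.mem_iff.1 hv1 with rfl | rfl
    · exact fun hh => hmx e₂ he2m hv2 hh.symm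
    · exact fun hh => hmz e₂ he2m hv2 hh.symm
  intro e₁ he₁ e₂ he₂ hne hsh
  rcases eq_or_ne e₁ s(x,z) with rfl | hne1
  · exact aux e₂ he₂ (fun hh => hne hh.symm) hsh
  rcases eq_or_ne e₂ s(x,z) with rfl | hne2
  · obtain ⟨v, hv1, hv2⟩ := hsh
    exact (aux e₁ he₁ hne1 ⟨v, hv2, hv1⟩).symm
  · rw [Function.update_of_ne hne1, Function.update_of_ne hne2]
    exact hp e₁ (Finset.mem_erase.2 ⟨hne1, he₁⟩) e₂ (Finset.mem_erase.2 ⟨hne2, he₂⟩) hne hsh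

/-! ## The extension step of Vizing's theorem -/

lemma extend [Fintype V] {D : ℕ} (ES : Finset (Sym2 V)) (hES : ∀ e ∈ ES, ¬ e.IsDiag)
    (hdeg : ∀ v, (ES.filter (fun e => v ∈ e)).card ≤ D)
    (x y₀ : V) (he₀ : s(x, y₀) ∈ ES) (c : Sym2 V → Fin (D+1))
    (hc : Proper c (ES.erase s(x, y₀))) : ∃ c' : Sym2 V → Fin (D+1), Proper c' ES := by
  have hdegS : ∀ (T : Finset (Sym2 V)), T ⊆ ES → ∀ v,
      (T.filter (fun e => v ∈ e)).card ≤ D := fun T hT v =>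
    le_trans (Finset.card_le_card (Finset.filter_subset_filter _ hT)) (hdeg v)
  -- maximal fan
  set FanP : ℕ → (ℕ → V) → Prop := fun k f => f 0 = y₀ ∧ (∀ i ≤ k, s(x, f i) ∈ ES) ∧
    (∀ i ≤ k, ∀ j ≤ k, f i = f j → i = j) ∧
    (∀ i < k, Miss c (ES.erase s(x, y₀)) (f i) (c s(x, f (i+1)))) with hFanP
  have h0 : FanP 0 (fun _ => y₀) := by
    refine ⟨rfl, fun i _ => he₀, fun i hi j hj _ => by omega,
      fun i hi => absurd hi (Nat.not_lt_zero i)⟩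
  have hbdd : BddAbove {k | ∃ f, FanP k f} := by
    refine ⟨Fintype.card V, fun k hk => ?_⟩
    obtain ⟨f, hf⟩ := hk
    have hinj : Function.Injective (fun i : Fin (k+1) => f i) := by
      intro i j hij
      exact Fin.ext (hf.2.2.1 i (Nat.lt_succ_iff.mp i.2) j (Nat.lt_succ_iff.mp j.2) hij)
    have := Fintype.card_le_of_injective _ hinj
    simp only [Fintype.card_fin] at this
    omega
  have hLne : ({k | ∃ f, FanP k f}).Nonempty := ⟨0, ⟨fun _ => y₀, h0⟩⟩
  set k := sSup {k | ∃ f, FanP k f} with hkdef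
  obtain ⟨f, hf0, hfadj, hfinj, hfmiss⟩ : ∃ f, FanP k f := Nat.sSup_mem hLne hbdd
  subst hf0
  set S := ES.erase s(x, f 0) with hSdef
  have hSsub : S ⊆ ES := Finset.erase_subset _ _
  obtain ⟨α, hα⟩ := exists_miss c S x (hdegS S hSsub x)
  have hfx : ∀ i, i ≤ k → f i ≠ x := by
    intro i hi hh
    exact hES _ (hfadj i hi) (by rw [hh]; exact Sym2.mk_isDiag_iff.2 rfl)
  have hfS : ∀ i, 1 ≤ i → i ≤ k → s(x, f i) ∈ S := by
    intro i h1 hik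
    refine Finset.mem_erase.2 ⟨?_, hfadj i hik⟩
    intro hh
    have := hfinj i hik 0 (by omega) (Sym2.congr_right.1 hh)
    omega
  obtain ⟨β, hβ⟩ := exists_miss c S (f k) (hdegS S hSsub (f k))
  by_cases hcase : Miss c S x β
  · -- easy case : β is missing at x as well
    obtain ⟨c', h1, hmx, hmz⟩ := rotate_full ES x f c k
      hfadj (fun i hi => hfx i hi) hfinj hc hfmiss
    exact finish ES x (f k) (fun hh => hfx k le_rfl hh.symm) (hfadj k le_rfl) c' h1 β
      (hmx β hcase) (hmz β hβ)
  · -- main case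
    rw [Miss] at hcase
    push_neg at hcase
    obtain ⟨e, heS, hxe, hce⟩ := hcase
    obtain ⟨z, rfl⟩ := Sym2.mem_iff_exists.1 hxe
    -- z is in the fan : otherwise the fan could be extended
    have hzfan : ∃ i, i ≤ k ∧ z = f i := by
      by_contra hcon
      push_neg at hcon
      have hext : FanP (k+1) (fun i => if i = k+1 then z else f i) := by
        refine ⟨if_neg (by omega), ?_, ?_, ?_⟩
        · intro i hi
          beta_reduce
          by_cases hik : i = k+1
          · rw [if_pos hik]
            exact hSsub heS
          · rw [if_neg hik]
            exact hfadj i (by omega)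
        · intro i hi j' hj' hij
          beta_reduce at hij
          by_cases hik : i = k+1 <;> by_cases hjk : j' = k+1
          · rw [hik, hjk]
          · rw [if_pos hik, if_neg hjk] at hij
            exact absurd hij (hcon j' (by omega))
          · rw [if_neg hik, if_pos hjk] at hij
            exact absurd hij.symm (hcon i (by omega))
          · rw [if_neg hik, if_neg hjk] at hij
            exact hfinj i (by omega) j' (by omega) hij
        · intro i hi
          beta_reduce
          have h1 : (if i = k + 1 then z else f i) = f i := if_neg (by omega)
          by_cases hik : i = k
          · have h2 : (if i+1 = k + 1 then z else f (i+1)) = z := if_pos (by omega)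
            rw [h1, h2, hik, hce]
            exact hβ
          · have h2 : (if i+1 = k + 1 then z else f (i+1)) = f (i+1) := if_neg (by omega)
            rw [h1, h2]
            exact hfmiss i (by omega)
      have hmem : (k+1) ∈ {k | ∃ f, FanP k f} := ⟨fun i => if i = k+1 then z else f i, hext⟩
      have : k + 1 ≤ k := le_csSup hbdd hmem
      omega
    obtain ⟨i₀, hi₀k, rfl⟩ := hzfan
    have hi₀0 : i₀ ≠ 0 := by
      intro hh
      rw [hh] at heS
      exact (Finset.mem_erase.1 heS).1 rfl
    set j := i₀ - 1 with hjdef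
    have hji : i₀ = j + 1 := by omega
    have hjk : j < k := by omega
    have hmissj : Miss c S (f j) β := by
      have := hfmiss j hjk
      rw [← hji, hce] at this
      exact this
    have hab : α ≠ β := fun h => (hα _ heS hxe) (by rw [hce, h])
    set w := f k with hwdef
    have hwx : w ≠ x := hfx k le_rfl
    have hwj : w ≠ f j := fun h => by have := hfinj k le_rfl j (by omega) h; omega
    have hxj : x ≠ f j := fun h => hfx j (by omega) h.symm
    have hdeg2 := H_deg_two (c := c) (S := S) (α := α) (β := β) hc
    have hw1 := H_deg_one (α := α) hc (Or.inr hβ)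
    have hx1 := H_deg_one (β := β) hc (Or.inl hα)
    have hj1 := H_deg_one (α := α) hc (Or.inr hmissj)
    have hprop2 : Proper (swap c S α β w) S := swap_proper hc hab
    -- colors of non-β fan edges avoid α and β
    have hlow : ∀ i, i + 1 ≤ k → i ≠ j → c s(x, f (i+1)) ≠ α ∧ c s(x, f (i+1)) ≠ β := by
      intro i hik hij
      constructor
      · exact hα _ (hfS (i+1) (by omega) hik) (by simp)
      · intro hcon
        have hne : s(x, f (i+1)) ≠ s(x, f i₀) := fun hh => by
          have := hfinj (i+1) hik i₀ hi₀k (Sym2.congr_right.1 hh); omega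
        exact hc _ (hfS (i+1) (by omega) hik) _ heS hne ⟨x, by simp, hxe⟩ (by rw [hcon, hce])
    have hlowswap : ∀ i, i + 1 ≤ k → i ≠ j →
        swap c S α β w s(x, f (i+1)) = c s(x, f (i+1)) := by
      intro i h1 h2
      refine swap_eq_of_not _ (fun hs => ?_)
      rcases hs.2.1 with h | h
      · exact (hlow i h1 h2).1 h
      · exact (hlow i h1 h2).2 h
    by_cases hrx : (Hg c S α β).Reachable w x
    · -- Plan C : x is reachable, so f j is not; rotate to j and use β
      have hrj : ¬ (Hg c S α β).Reachable w (f j) := fun hrj =>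
        three_leaves hdeg2 hwx hwj hxj hw1 hx1 hj1 hrx hrj
      have hmiss' : ∀ i < j, Miss (swap c S α β w) S (f i)
          ((swap c S α β w) s(x, f (i+1))) := by
        intro i hij
        rw [hlowswap i (by omega) (by omega)]
        exact swap_miss_other (hlow i (by omega) (by omega)).1
          (hlow i (by omega) (by omega)).2 (hfmiss i (by omega))
      obtain ⟨c', h1, hmx, hmz⟩ := rotate_full ES x f (swap c S α β w) j
        (fun i hi => hfadj i (by omega)) (fun i hi => hfx i (by omega))
        (fun i hi i' hi' => hfinj i (by omega) i' (by omega)) hprop2 hmiss'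
      exact finish ES x (f j) hxj (hfadj j (by omega)) c' h1 β
        (hmx β (swap_miss_alpha hab hα hrx)) (hmz β (swap_miss_unreachable hrj hmissj))
    · by_cases hrj : (Hg c S α β).Reachable w (f j)
      · -- Plan B : rotate to j and use α
        have hmiss' : ∀ i < j, Miss (swap c S α β w) S (f i)
            ((swap c S α β w) s(x, f (i+1))) := by
          intro i hij
          rw [hlowswap i (by omega) (by omega)]
          exact swap_miss_other (hlow i (by omega) (by omega)).1
            (hlow i (by omega) (by omega)).2 (hfmiss i (by omega))
        obtain ⟨c', h1, hmx, hmz⟩ := rotate_full ES x f (swap c S α β w) j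
          (fun i hi => hfadj i (by omega)) (fun i hi => hfx i (by omega))
          (fun i hi i' hi' => hfinj i (by omega) i' (by omega)) hprop2 hmiss'
        exact finish ES x (f j) hxj (hfadj j (by omega)) c' h1 α
          (hmx α (swap_miss_unreachable hrx hα)) (hmz α (swap_miss_beta hab hmissj hrj))
      · -- Plan A : rotate the full fan and use α
        have hmiss' : ∀ i < k, Miss (swap c S α β w) S (f i)
            ((swap c S α β w) s(x, f (i+1))) := by
          intro i hik
          by_cases hij : i = j
          · have hagree : swap c S α β w s(x, f (i+1)) = c s(x, f (i+1)) := by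
              rw [hij, ← hji]
              exact swap_eq_at_unreachable hrx heS hxe
            rw [hagree, hij, ← hji, hce]
            exact swap_miss_unreachable hrj hmissj
          · rw [hlowswap i (by omega) hij]
            exact swap_miss_other (hlow i (by omega) hij).1 (hlow i (by omega) hij).2
              (hfmiss i hik)
        obtain ⟨c', h1, hmx, hmz⟩ := rotate_full ES x f (swap c S α β w) k
          hfadj (fun i hi => hfx i hi) hfinj hprop2 hmiss'
        exact finish ES x (f k) (fun hh => hfx k le_rfl hh.symm) (hfadj k le_rfl) c' h1 α
          (hmx α (swap_miss_unreachable hrx hα))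
          (hmz α (swap_miss_beta hab hβ (SimpleGraph.Reachable.refl w)))

/-- Vizing's theorem, Finset form -/
lemma vizing_ex [Fintype V] {D : ℕ} :
    ∀ (n : ℕ) (ES : Finset (Sym2 V)), ES.card ≤ n → (∀ e ∈ ES, ¬ e.IsDiag) →
      (∀ v, (ES.filter (fun e => v ∈ e)).card ≤ D) →
      ∃ c : Sym2 V → Fin (D+1), Proper c ES := by
  intro n
  induction n with
  | zero =>
    intro ES hcard _ _
    have : ES = ∅ := Finset.card_eq_zero.1 (Nat.le_zero.1 hcard)
    subst this
    exact ⟨fun _ => 0, fun e he => absurd he (Finset.notMem_empty e)⟩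
  | succ n ih =>
    intro ES hcard hES hdeg
    rcases Finset.eq_empty_or_nonempty ES with rfl | ⟨e, he⟩
    · exact ⟨fun _ => 0, fun e he => absurd he (Finset.notMem_empty e)⟩
    · obtain ⟨xx, yy, rfl⟩ : ∃ a b, s(a, b) = e := Sym2.ind (fun a b => ⟨a, b, rfl⟩) e
      obtain ⟨c, hcp⟩ := ih (ES.erase s(xx, yy))
        (by rw [Finset.card_erase_of_mem he]; omega)
        (fun e' he' => hES e' (Finset.erase_subset _ _ he'))
        (fun v => le_trans
          (Finset.card_le_card (Finset.filter_subset_filter _ (Finset.erase_subset _ _)))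
          (hdeg v))
      exact extend ES hES hdeg xx yy he c hcp

end Vz

/-- A proper edge coloring: distinct incident edges of `G` get distinct colors. -/
def IsProperEdgeColoring {V α : Type*} (G : SimpleGraph V) (c : Sym2 V → α) : Prop :=
  ∀ e₁ ∈ G.edgeSet, ∀ e₂ ∈ G.edgeSet, e₁ ≠ e₂ → (∃ v, v ∈ e₁ ∧ v ∈ e₂) → c e₁ ≠ c e₂

/-- The chromatic index: least number of colors in a proper edge coloring. -/
noncomputable def chromaticIndex {V : Type*} (G : SimpleGraph V) : ℕ :=
  sInf {n | ∃ c : Sym2 V → Fin n, IsProperEdgeColoring G c}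

/-- Vizing's theorem: `Δ(G) ≤ χ'(G) ≤ Δ(G) + 1`. -/
theorem stmt_0 {V : Type*} [Fintype V] (G : SimpleGraph V) [DecidableRel G.Adj] :
    G.maxDegree ≤ chromaticIndex G ∧ chromaticIndex G ≤ G.maxDegree + 1 := by
  letI : DecidableEq V := Classical.decEq V
  have hES : ∀ e ∈ G.edgeFinset, ¬ e.IsDiag := fun e he =>
    SimpleGraph.not_isDiag_of_mem_edgeSet G (SimpleGraph.mem_edgeFinset.1 he)
  have hdeg : ∀ v, (G.edgeFinset.filter (fun e => v ∈ e)).card ≤ G.maxDegree := by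
    intro v
    have h1 : G.incidenceFinset v = G.edgeFinset.filter (fun e => v ∈ e) := by
      rw [SimpleGraph.incidenceFinset_eq_filter]
    rw [← h1, SimpleGraph.card_incidenceFinset_eq_degree]
    exact SimpleGraph.degree_le_maxDegree G v
  obtain ⟨c, hcp⟩ := Vz.vizing_ex (D := G.maxDegree) G.edgeFinset.card G.edgeFinset
    le_rfl hES hdeg
  have hmem : G.maxDegree + 1 ∈ {n | ∃ c : Sym2 V → Fin n, IsProperEdgeColoring G c} := by
    refine ⟨c, ?_⟩
    intro e₁ he₁ e₂ he₂ hne hsh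
    exact hcp e₁ (SimpleGraph.mem_edgeFinset.2 he₁) e₂ (SimpleGraph.mem_edgeFinset.2 he₂) hne hsh
  constructor
  · apply le_csInf ⟨_, hmem⟩
    rintro n ⟨cn, hcn⟩
    apply SimpleGraph.maxDegree_le_of_forall_degree_le
    intro v
    rw [← SimpleGraph.card_incidenceFinset_eq_degree]
    have hinj : Set.InjOn cn (G.incidenceFinset v) := by
      intro e₁ he₁ e₂ he₂ heq
      by_contra hne
      rw [Finset.mem_coe, SimpleGraph.mem_incidenceFinset] at he₁ he₂
      exact hcn e₁ he₁.1 e₂ he₂.1 hne ⟨v, he₁.2, he₂.2⟩ heq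
    calc (G.incidenceFinset v).card
        = ((G.incidenceFinset v).image cn).card := (Finset.card_image_of_injOn hinj).symm
      _ ≤ (Finset.univ : Finset (Fin n)).card := Finset.card_le_card (Finset.subset_univ _)
      _ = n := by simp
  · exact Nat.sInf_le hmem
end

section
/- Removing all pendant vertices (vertices of degree 1) from a connected graph G with at least one edge in the remaining graph does not change its stretch index: σ(G) = σ(G \ P), where P is the set of degree-1 vertices. -/
/-- `T` is a tree `t`-spanner of `G`: a spanning tree of `G` in which the endpoints of
every edge of `G` are at distance at most `t`. -/
def IsTreeSpanner {V : Type*} (G T : SimpleGraph V) (t : ℕ) : Prop :=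
  T ≤ G ∧ T.IsTree ∧ ∀ u v, G.Adj u v → T.dist u v ≤ t

/-- The stretch index `σ(G)`: the least `t ≥ 1` such that `G` admits a tree `t`-spanner. -/
noncomputable def stretchIndex {V : Type*} (G : SimpleGraph V) : ℕ :=
  sInf {t | 1 ≤ t ∧ ∃ T : SimpleGraph V, IsTreeSpanner G T t}

open SimpleGraph

private lemma deg_one_unique {V : Type*} [Fintype V] (G : SimpleGraph V) [DecidableRel G.Adj]
    {w x y : V} (hd : G.degree w = 1) (hx : G.Adj w x) (hy : G.Adj w y) : x = y := by
  have hd' : (G.neighborFinset w).card = 1 := hd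
  obtain ⟨a, ha⟩ := Finset.card_eq_one.1 hd'
  have hx' : x ∈ G.neighborFinset w := (G.mem_neighborFinset w x).2 hx
  have hy' : y ∈ G.neighborFinset w := (G.mem_neighborFinset w y).2 hy
  rw [ha, Finset.mem_singleton] at hx' hy'
  exact hx'.trans hy'.symm

private lemma internal_two_adj {V : Type*} {X : SimpleGraph V} :
    ∀ {a b : V} (p : X.Walk a b), p.IsPath → ∀ w ∈ p.support, w ≠ a → w ≠ b →
      ∃ x y, x ≠ y ∧ X.Adj w x ∧ X.Adj w y := by
  intro a b p
  induction p with
  | nil => intro _ w hw hwa _; simp at hw; exact absurd hw hwa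
  | @cons a c b h q ih =>
    intro hp w hw hwa hwb
    rw [SimpleGraph.Walk.support_cons, List.mem_cons] at hw
    rcases hw with rfl | hw
    · exact absurd rfl hwa
    by_cases hwc : w = c
    · subst hwc
      cases q with
      | nil => exact absurd rfl hwb
      | @cons _ d _ h2 q2 =>
        refine ⟨a, d, ?_, h.symm, h2⟩
        rintro rfl
        exact (SimpleGraph.Walk.cons_isPath_iff _ _).1 hp |>.2
          (by simp [SimpleGraph.Walk.support_cons])
    · exact ih hp.of_cons w hw hwc hwb

private lemma cycle_two_adj {V : Type*} [DecidableEq V] {X : SimpleGraph V} {a : V}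
    (c : X.Walk a a) (hc : c.IsCycle)
    {w : V} (hw : w ∈ c.support) : ∃ x y, x ≠ y ∧ X.Adj w x ∧ X.Adj w y := by
  have hc' : (c.rotate w hw).IsCycle := hc.rotate hw
  obtain ⟨b, hb, q, hq⟩ := SimpleGraph.Walk.not_nil_iff.1 hc'.not_nil
  rw [hq] at hc'
  have hqp := (SimpleGraph.Walk.cons_isCycle_iff _ _).1 hc'
  have hql : 2 ≤ q.length := by
    have := hc'.three_le_length
    simp [SimpleGraph.Walk.length_cons] at this
    omega
  have hqrnil : ¬q.reverse.Nil := by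
    rw [SimpleGraph.Walk.nil_iff_length_eq, SimpleGraph.Walk.length_reverse]
    omega
  obtain ⟨x, hx, r, hr⟩ := SimpleGraph.Walk.not_nil_iff.1 hqrnil
  have hmem : s(x, w) ∈ q.edges := by
    have : s(w, x) ∈ q.reverse.edges := by rw [hr]; simp
    rw [SimpleGraph.Walk.edges_reverse, List.mem_reverse] at this
    rwa [Sym2.eq_swap] at this
  refine ⟨b, x, ?_, hb, hx⟩
  rintro rfl
  exact hqp.2 (by rwa [Sym2.eq_swap] at hmem)

private lemma lift_walk {V : Type*} {S : Set V} {X : SimpleGraph V} {Y : SimpleGraph S}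
    (hXY : ∀ u v : S, X.Adj u v → Y.Adj u v) :
    ∀ {a b : V} (p : X.Walk a b), (∀ w ∈ p.support, w ∈ S) → ∀ (ha : a ∈ S) (hb : b ∈ S),
    ∃ q : Y.Walk ⟨a, ha⟩ ⟨b, hb⟩, q.length = p.length ∧
      q.support.map Subtype.val = p.support ∧
      q.edges.map (Sym2.map Subtype.val) = p.edges := by
  intro a b p
  induction p with
  | nil => intro _ ha _; exact ⟨SimpleGraph.Walk.nil, by simp, by simp, by simp⟩
  | @cons a c b h q ih =>
    intro hs ha hb
    have hc : c ∈ S := hs c (by simp)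
    obtain ⟨q', h1, h2, h3⟩ := ih (fun w hw => hs w (by simp [hw])) hc hb
    exact ⟨SimpleGraph.Walk.cons (hXY ⟨a, ha⟩ ⟨c, hc⟩ h) q', by simp [h1], by simp [h2],
      by simp [h3]⟩

/-- The extension of a graph `T'` on `S` to all of `V`, adding all `G`-edges with an
endpoint outside `S`. -/
private def extGraph {V : Type*} (G : SimpleGraph V) (S : Set V) (T' : SimpleGraph S) :
    SimpleGraph V where
  Adj u v := (∃ (hu : u ∈ S) (hv : v ∈ S), T'.Adj ⟨u, hu⟩ ⟨v, hv⟩) ∨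
    (G.Adj u v ∧ (u ∉ S ∨ v ∉ S))
  symm := by
    constructor
    rintro u v (⟨hu, hv, h⟩ | ⟨h, hs⟩)
    exacts [Or.inl ⟨hv, hu, h.symm⟩, Or.inr ⟨h.symm, hs.symm⟩]
  loopless := by
    constructor
    rintro u (⟨hu, hv, h⟩ | ⟨h, _⟩)
    exacts [T'.loopless.irrefl _ h, G.loopless.irrefl _ h]

/-- Removing the pendant (degree-1) vertices of a connected graph does not change the
stretch index, provided the remaining graph is connected, still has an edge, and every
pendant vertex has its (unique) neighbor among the non-pendant vertices. -/
theorem stmt_5 {V : Type*} [Fintype V] (G : SimpleGraph V) [DecidableRel G.Adj]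
    (hconn : G.Connected)
    (hconn' : (G.induce {v : V | G.degree v ≠ 1}).Connected)
    (hedge : (G.induce {v : V | G.degree v ≠ 1}).edgeSet.Nonempty)
    (hpend : ∀ u v : V, G.degree u = 1 → G.Adj u v → G.degree v ≠ 1) :
    stretchIndex G = stretchIndex (G.induce {v : V | G.degree v ≠ 1}) := by
  classical
  set S : Set V := {v : V | G.degree v ≠ 1} with hSdef
  unfold stretchIndex
  congr 1
  ext t
  simp only [Set.mem_setOf_eq]
  constructor
  · rintro ⟨ht, T, hTG, hTtree, hTd⟩
    have hsup : ∀ {a b : V} (p : T.Walk a b), p.IsPath → a ∈ S → b ∈ S →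
        ∀ w ∈ p.support, w ∈ S := by
      intro a b p hp ha hb w hw
      by_contra hwS
      have hdeg : G.degree w = 1 := not_not.1 hwS
      have hwa : w ≠ a := fun h => hwS (h ▸ ha)
      have hwb : w ≠ b := fun h => hwS (h ▸ hb)
      obtain ⟨x, y, hxy, hx, hy⟩ := internal_two_adj p hp w hw hwa hwb
      exact hxy (deg_one_unique G hdeg (hTG hx) (hTG hy))
    have hXY : ∀ u v : S, T.Adj u v → (T.induce S).Adj u v := fun u v h => h
    refine ⟨ht, T.induce S, fun u v h => hTG h, ⟨?_, ?_⟩, ?_⟩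
    · rw [connected_iff]
      refine ⟨fun u v => ?_, hconn'.nonempty⟩
      obtain ⟨p⟩ := hTtree.isConnected.preconnected u.1 v.1
      obtain ⟨q, -, -, -⟩ := lift_walk hXY p.bypass (hsup p.bypass p.bypass_isPath u.2 v.2)
        u.2 v.2
      exact ⟨q⟩
    · intro x q hq
      let emb : T.induce S ↪g T := SimpleGraph.Embedding.induce S
      exact hTtree.IsAcyclic _ (hq.map (f := emb.toHom) (fun a b h => emb.injective h))
    · intro u v huv
      obtain ⟨p, hp⟩ := hTtree.isConnected.exists_walk_length_eq_dist u.1 v.1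
      obtain ⟨q, hql, -, -⟩ := lift_walk hXY p.bypass (hsup p.bypass p.bypass_isPath u.2 v.2)
        u.2 v.2
      calc (T.induce S).dist u v ≤ q.length := SimpleGraph.dist_le q
        _ = p.bypass.length := hql
        _ ≤ p.length := p.length_bypass_le
        _ = T.dist u.1 v.1 := hp
        _ ≤ t := hTd _ _ huv
  · rintro ⟨ht, T', hT'G, hT'tree, hT'd⟩
    set T : SimpleGraph V := extGraph G S T' with hTdef
    have hTG : T ≤ G := by
      rintro u v (⟨hu, hv, h⟩ | ⟨h, -⟩)
      · exact hT'G h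
      · exact h
    have key : ∀ u v : S, T.Adj u v → T'.Adj u v := by
      rintro ⟨u, hu⟩ ⟨v, hv⟩ (⟨hu', hv', h⟩ | ⟨-, hs⟩)
      · exact h
      · rcases hs with hs | hs <;> exact absurd (by assumption) hs
    let f : T' →g T := ⟨Subtype.val, fun {x y} h => Or.inl ⟨x.2, y.2, h⟩⟩
    have rep : ∀ u : V, ∃ (u' : V) (h : u' ∈ S), T.Reachable u u' := by
      intro u
      by_cases hu : u ∈ S
      · exact ⟨u, hu, Reachable.refl _⟩
      · have hdeg : G.degree u = 1 := not_not.1 hu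
        obtain ⟨v, hv⟩ := (G.degree_pos_iff_exists_adj u).1 (by omega)
        have hvS : v ∈ S := hpend u v hdeg hv
        exact ⟨v, hvS, SimpleGraph.Adj.reachable (Or.inr ⟨hv, Or.inl hu⟩)⟩
    refine ⟨ht, T, hTG, ⟨?_, ?_⟩, ?_⟩
    · rw [connected_iff]
      refine ⟨fun u v => ?_, hconn.nonempty⟩
      obtain ⟨u', hu', hru⟩ := rep u
      obtain ⟨v', hv', hrv⟩ := rep v
      have hmid : T'.Reachable ⟨u', hu'⟩ ⟨v', hv'⟩ :=
        hT'tree.isConnected.preconnected _ _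
      exact hru.trans ((hmid.map f).trans hrv.symm)
    · intro x c hc
      have hsupC : ∀ w ∈ c.support, w ∈ S := by
        intro w hw
        by_contra hwS
        have hdeg : G.degree w = 1 := not_not.1 hwS
        obtain ⟨a, b, hab, ha, hb⟩ := cycle_two_adj c hc hw
        exact hab (deg_one_unique G hdeg (hTG ha) (hTG hb))
      have hx : x ∈ S := hsupC x c.start_mem_support
      obtain ⟨q, hql, hqs, hqe⟩ := lift_walk key c hsupC hx hx
      have hqc : q.IsCycle := by
        rw [SimpleGraph.Walk.isCycle_def]
        refine ⟨(SimpleGraph.Walk.isTrail_def q).2 ?_, ?_, ?_⟩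
        · exact List.Nodup.of_map _ (by rw [hqe]; exact hc.isCircuit.isTrail.edges_nodup)
        · intro h
          rw [h] at hql
          have := hc.three_le_length
          simp at hql
          omega
        · refine List.Nodup.of_map (Subtype.val) ?_
          have : (q.support.map Subtype.val).tail = c.support.tail := by rw [hqs]
          rw [← List.map_tail] at this
          rw [this]
          exact hc.support_nodup
      exact hT'tree.IsAcyclic _ hqc
    · intro u v huv
      by_cases hu : u ∈ S
      · by_cases hv : v ∈ S
        · have huv' : (G.induce S).Adj ⟨u, hu⟩ ⟨v, hv⟩ := huv
          obtain ⟨p, hp⟩ := hT'tree.isConnected.exists_walk_length_eq_dist ⟨u, hu⟩ ⟨v, hv⟩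
          calc T.dist u v ≤ (p.map f).length := SimpleGraph.dist_le _
            _ = p.length := by simp
            _ = T'.dist ⟨u, hu⟩ ⟨v, hv⟩ := hp
            _ ≤ t := hT'd _ _ huv'
        · have hadj : T.Adj u v := Or.inr ⟨huv, Or.inr hv⟩
          calc T.dist u v ≤ (SimpleGraph.Walk.cons hadj SimpleGraph.Walk.nil).length :=
                SimpleGraph.dist_le _
            _ = 1 := by simp
            _ ≤ t := ht
      · have hadj : T.Adj u v := Or.inr ⟨huv, Or.inl hu⟩
        calc T.dist u v ≤ (SimpleGraph.Walk.cons hadj SimpleGraph.Walk.nil).length :=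
              SimpleGraph.dist_le _
          _ = 1 := by simp
          _ ≤ t := ht
end

section
/- Let G = ((Q,S),E) be a connected split graph in which every vertex of the independent set S has degree greater than 1, and G is not a tree. Then σ(G) = 2 if and only if G has a universal vertex. -/
open SimpleGraph

section StretchHelpers

variable {V : Type*} {T : SimpleGraph V}

private lemma walk_unique (hT : T.IsAcyclic) {u v : V} (p q : T.Walk u v)
    (hp : p.IsPath) (hq : q.IsPath) : p = q :=
  congrArg Subtype.val ((isAcyclic_iff_path_unique.mp hT) ⟨p, hp⟩ ⟨q, hq⟩)

private lemma h22 (hT : T.IsAcyclic) {x y m m' : V} (hxy : x ≠ y)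
    (h1 : T.Adj x m) (h2 : T.Adj m y) (h3 : T.Adj x m') (h4 : T.Adj m' y) : m = m' := by
  have hp : (Walk.cons h1 (Walk.cons h2 Walk.nil)).IsPath := by
    simp [Walk.isPath_def, h1.ne, h2.ne, hxy]
  have hq : (Walk.cons h3 (Walk.cons h4 Walk.nil)).IsPath := by
    simp [Walk.isPath_def, h3.ne, h4.ne, hxy]
  have := congrArg Walk.support (walk_unique hT _ _ hp hq)
  simpa using this

private lemma h12 (hT : T.IsAcyclic) {x y m : V} (hxy : T.Adj x y)
    (h1 : T.Adj x m) (h2 : T.Adj m y) : False := by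
  have hp : (Walk.cons hxy Walk.nil).IsPath := by
    simp [Walk.isPath_def, hxy.ne]
  have hq : (Walk.cons h1 (Walk.cons h2 Walk.nil)).IsPath := by
    simp [Walk.isPath_def, h1.ne, h2.ne, hxy.ne]
  have := congrArg Walk.length (walk_unique hT _ _ hp hq)
  simp at this

private lemma h23 (hT : T.IsAcyclic) {x y m a b : V}
    (h1 : T.Adj x m) (h2 : T.Adj m y) (h3 : T.Adj x a) (h4 : T.Adj a b) (h5 : T.Adj b y)
    (hxy : x ≠ y) (hxb : x ≠ b) (hay : a ≠ y) : False := by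
  have hp : (Walk.cons h1 (Walk.cons h2 Walk.nil)).IsPath := by
    simp [Walk.isPath_def, h1.ne, h2.ne, hxy]
  have hq : (Walk.cons h3 (Walk.cons h4 (Walk.cons h5 Walk.nil))).IsPath := by
    simp [Walk.isPath_def, h3.ne, h4.ne, h5.ne, hxy, hxb, hay]
  have := congrArg Walk.length (walk_unique hT _ _ hp hq)
  simp at this

private lemma h24 (hT : T.IsAcyclic) {x y m a b c : V}
    (h1 : T.Adj x m) (h2 : T.Adj m y) (h3 : T.Adj x a) (h4 : T.Adj a b) (h5 : T.Adj b c)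
    (h6 : T.Adj c y) (hxy : x ≠ y) (hxb : x ≠ b) (hxc : x ≠ c) (hac : a ≠ c) (hay : a ≠ y)
    (hby : b ≠ y) : False := by
  have hp : (Walk.cons h1 (Walk.cons h2 Walk.nil)).IsPath := by
    simp [Walk.isPath_def, h1.ne, h2.ne, hxy]
  have hq : (Walk.cons h3 (Walk.cons h4 (Walk.cons h5 (Walk.cons h6 Walk.nil)))).IsPath := by
    simp [Walk.isPath_def, h3.ne, h4.ne, h5.ne, h6.ne, hxy, hxb, hxc, hac, hay, hby]
  have := congrArg Walk.length (walk_unique hT _ _ hp hq)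
  simp at this

private lemma D2 (hc : T.Connected) {u v : V} (h : T.dist u v ≤ 2) :
    u = v ∨ T.Adj u v ∨ ∃ m, T.Adj u m ∧ T.Adj m v := by
  obtain ⟨w, hw⟩ := (hc u v).exists_walk_length_eq_dist
  rw [← hw] at h
  cases w with
  | nil => exact Or.inl rfl
  | @cons _ b _ h1 w1 =>
    cases w1 with
    | nil => exact Or.inr (Or.inl h1)
    | @cons _ c _ h2 w2 =>
      cases w2 with
      | nil => exact Or.inr (Or.inr ⟨b, h1, h2⟩)
      | cons h3 w3 => simp [Walk.length_cons] at h

private lemma center_of_clique (hT : T.IsAcyclic) (Q : Set V)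
    (d : ∀ a ∈ Q, ∀ b ∈ Q, a ≠ b → T.Adj a b ∨ ∃ m, T.Adj a m ∧ T.Adj m b)
    {x y : V} (hx : x ∈ Q) (hy : y ∈ Q) (hxy : x ≠ y) :
    ∃ c, ∀ a ∈ Q, a ≠ c → T.Adj c a := by
  rcases d x hx y hy hxy with hadj | ⟨c0, hxc0, hc0y⟩
  · -- Case 1 : x and y adjacent
    by_cases hall : ∀ a ∈ Q, a ≠ x → T.Adj x a
    · exact ⟨x, hall⟩
    · push_neg at hall
      obtain ⟨a0, ha0Q, ha0x, hna0⟩ := hall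
      have ha0y : a0 ≠ y := fun h => hna0 (h ▸ hadj)
      rcases d x hx a0 ha0Q (Ne.symm ha0x) with h | ⟨m, hxm, hma0⟩
      · exact absurd h hna0
      have hya0 : T.Adj y a0 := by
        rcases d y hy a0 ha0Q (Ne.symm ha0y) with h | ⟨m', hym', hm'a0⟩
        · exact h
        · exfalso
          by_cases hm'x : m' = x
          · exact hna0 (hm'x ▸ hm'a0)
          · exact h23 hT hxm hma0 hadj hym' hm'a0 (Ne.symm ha0x)
              (fun h => hm'x h.symm) (Ne.symm ha0y)
      refine ⟨y, fun a haQ hay0 => ?_⟩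
      by_contra hnya
      by_cases hax0 : a = x
      · exact hnya (hax0 ▸ hadj.symm)
      by_cases haa0 : a = a0
      · exact hnya (haa0 ▸ hya0)
      rcases d x hx a haQ (Ne.symm hax0) with hxa | ⟨p, hxp, hpa⟩
      · rcases d a haQ a0 ha0Q haa0 with haa0' | ⟨m'', ham'', hm''a0⟩
        · exact hay0 (h22 hT (Ne.symm ha0x) hxa haa0' hadj hya0)
        · by_cases hm''x : m'' = x
          · exact hna0 (hm''x ▸ hm''a0)
          by_cases hm''y : m'' = y
          · exact hnya (hm''y ▸ ham'').symm
          · exact h23 hT hadj hya0 hxa ham'' hm''a0 (Ne.symm ha0x)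
              (fun h => hm''x h.symm) haa0
      · rcases d y hy a haQ (Ne.symm hay0) with h | ⟨p', hyp', hp'a⟩
        · exact hnya h
        · by_cases hp'x : p' = x
          · exact h12 hT (hp'x ▸ hp'a) hxp hpa
          · exact h23 hT hxp hpa hadj hyp' hp'a (Ne.symm hax0)
              (fun h => hp'x h.symm) (Ne.symm hay0)
  · -- Case 2 : midpoint c0
    refine ⟨c0, fun a haQ hac0 => ?_⟩
    by_contra hna
    by_cases hax0 : a = x
    · exact hna (hax0 ▸ hxc0.symm)
    by_cases hay0 : a = y
    · exact hna (hay0 ▸ hc0y)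
    rcases d a haQ x hx hax0 with hax' | ⟨m, ham, hmx⟩
    · rcases d a haQ y hy hay0 with hay' | ⟨m, ham, hmy⟩
      · exact hac0 (h22 hT hxy hax'.symm hay' hxc0 hc0y)
      · by_cases hmx2 : m = x
        · exact h12 hT (hmx2 ▸ hmy) hxc0 hc0y
        · exact h23 hT hxc0 hc0y hax'.symm ham hmy hxy (fun h => hmx2 h.symm) hay0
    · rcases d a haQ y hy hay0 with hay' | ⟨m', ham', hm'y⟩
      · by_cases hmy2 : m = y
        · exact h12 hT ((hmy2 ▸ hmx) : T.Adj y x).symm hxc0 hc0y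
        · exact h23 hT hc0y.symm hxc0.symm hay'.symm ham hmx (Ne.symm hxy)
            (fun h => hmy2 h.symm) hax0
      · by_cases hm'x2 : m' = x
        · exact h12 hT (hm'x2 ▸ hm'y) hxc0 hc0y
        · exact h24 hT hmx.symm ham.symm hxc0 hc0y hm'y.symm ham'.symm
            (fun h => hax0 h.symm) hxy (fun h => hm'x2 h.symm)
            (fun h => hna ((h ▸ ham') : T.Adj a c0).symm) (fun h => hac0 h.symm)
            (fun h => hay0 h.symm)

end StretchHelpers

section StarHelpers

variable {V : Type*}

private def starG (v : V) : SimpleGraph V where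
  Adj a b := (a = v ∧ b ≠ v) ∨ (b = v ∧ a ≠ v)
  symm := ⟨by intro a b h; tauto⟩
  loopless := ⟨by rintro a (⟨h1, h2⟩ | ⟨h1, h2⟩) <;> exact h2 h1⟩

private lemma starG_connected [Nonempty V] (v : V) : (starG v).Connected := by
  rw [connected_iff]
  refine ⟨fun a b => ?_, ‹_›⟩
  have key : ∀ w, w ≠ v → (starG v).Reachable v w :=
    fun w hw => Adj.reachable (Or.inl ⟨rfl, hw⟩)
  by_cases hab : a = b
  · exact hab ▸ Reachable.refl a
  by_cases ha : a = v
  · subst ha; exact key b (fun h => hab h.symm)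
  · by_cases hb : b = v
    · subst hb; exact (key a ha).symm
    · exact (key a ha).symm.trans (key b hb)

private lemma starG_acyclic (v : V) : (starG v).IsAcyclic := by
  rw [isAcyclic_iff_forall_edge_isBridge]
  suffices H : ∀ w, w ≠ v → ¬(starG v \ fromEdgeSet {s(v, w)}).Reachable v w by
    intro e he
    induction e using Sym2.ind with
    | _ a b =>
      rw [mem_edgeSet] at he
      rw [isBridge_iff]
      rcases he with ⟨ha, hb⟩ | ⟨hb, ha⟩
      · subst ha; exact H b hb
      · subst hb
        intro hr
        rw [Sym2.eq_swap] at hr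
        exact H a ha hr.symm
  intro w hw hr
  obtain ⟨p⟩ := hr.symm
  cases p with
  | nil => exact hw rfl
  | @cons _ b _ h q =>
    rw [sdiff_adj, fromEdgeSet_adj] at h
    obtain ⟨hadj, hne⟩ := h
    rcases hadj with ⟨h1, _⟩ | ⟨h1, h2⟩
    · exact hw h1
    · subst h1
      exact hne ⟨by rw [Sym2.eq_swap]; exact Set.mem_singleton _, h2⟩

end StarHelpers

/-- For a connected split graph, not a tree, in which every vertex of the independent set
has degree greater than 1: `σ(G) = 2` iff `G` has a universal vertex. -/
theorem stmt_7 {V : Type*} [Fintype V] (G : SimpleGraph V) [DecidableRel G.Adj]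
    (hconn : G.Connected) (Q S : Set V)
    (hdisj : Disjoint Q S) (hcover : Q ∪ S = Set.univ)
    (hclique : G.IsClique Q)
    (hindep : ∀ u ∈ S, ∀ v ∈ S, ¬ G.Adj u v)
    (hdeg : ∀ v ∈ S, 1 < G.degree v)
    (hnottree : ¬ G.IsTree) :
    stretchIndex G = 2 ↔ ∃ v : V, ∀ w : V, w ≠ v → G.Adj v w := by
  classical
  constructor
  · intro h
    by_cases hQ2 : ∃ x ∈ Q, ∃ y ∈ Q, x ≠ y
    · obtain ⟨x, hxQ, y, hyQ, hxy⟩ := hQ2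
      have hne : {t | 1 ≤ t ∧ ∃ T : SimpleGraph V, IsTreeSpanner G T t}.Nonempty := by
        by_contra hemp
        rw [Set.not_nonempty_iff_eq_empty] at hemp
        unfold stretchIndex at h
        rw [hemp, Nat.sInf_empty] at h
        exact two_ne_zero h.symm
      have hmem : (2:ℕ) ∈ {t | 1 ≤ t ∧ ∃ T : SimpleGraph V, IsTreeSpanner G T t} := by
        have := Nat.sInf_mem hne
        unfold stretchIndex at h
        rwa [h] at this
      obtain ⟨-, T, hTG, hTtree, hTd⟩ := hmem
      have hTc : T.Connected := hTtree.isConnected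
      have hAc : T.IsAcyclic := hTtree.IsAcyclic
      have d : ∀ a ∈ Q, ∀ b ∈ Q, a ≠ b → T.Adj a b ∨ ∃ m, T.Adj a m ∧ T.Adj m b := by
        intro a ha b hb hab
        rcases D2 hTc (hTd a b (hclique ha hb hab)) with h' | h' | h'
        · exact absurd h' hab
        · exact Or.inl h'
        · exact Or.inr h'
      obtain ⟨c, hc⟩ := center_of_clique hAc Q d hxQ hyQ hxy
      refine ⟨c, fun w hw => ?_⟩
      have hwQS : w ∈ Q ∪ S := hcover ▸ Set.mem_univ w
      rcases hwQS with hwQ | hwS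
      · exact hTG (hc w hwQ hw)
      · have h2 : 1 < (G.neighborFinset w).card := by
          rw [card_neighborFinset_eq_degree]; exact hdeg w hwS
        obtain ⟨q1, hq1m, q2, hq2m, hq12⟩ := Finset.one_lt_card.mp h2
        rw [mem_neighborFinset] at hq1m hq2m
        have hQmem : ∀ a, G.Adj w a → a ∈ Q := by
          intro a ha
          have : a ∈ Q ∪ S := hcover ▸ Set.mem_univ a
          rcases this with h' | h'
          · exact h'
          · exact absurd ha (hindep w hwS a h')
        have hq1Q : q1 ∈ Q := hQmem q1 hq1m
        have hq2Q : q2 ∈ Q := hQmem q2 hq2m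
        by_cases hq1c : q1 = c
        · exact (hq1c ▸ hq1m).symm
        by_cases hq2c : q2 = c
        · exact (hq2c ▸ hq2m).symm
        have hcq1 : T.Adj c q1 := hc q1 hq1Q hq1c
        have hcq2 : T.Adj c q2 := hc q2 hq2Q hq2c
        have hns : ∀ a b : V, G.Adj w a → G.Adj w b → a ≠ b →
            T.Adj c a → T.Adj c b → ¬ T.Adj w a := by
          intro a b hwa hwb hab hca hcb hws
          rcases D2 hTc (hTd w b hwb) with heq | hadj | ⟨m, hwm, hmb⟩
          · exact hwb.ne heq
          · exact hw (h22 hAc hab hws.symm hadj hca.symm hcb)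
          · by_cases hma : m = a
            · exact h12 hAc (hma ▸ hmb) hca.symm hcb
            · exact h23 hAc hca.symm hcb hws.symm hwm hmb hab
                (fun h' => hma h'.symm) hwb.ne
        have hns1 : ¬ T.Adj w q1 := hns q1 q2 hq1m hq2m hq12 hcq1 hcq2
        have hns2 : ¬ T.Adj w q2 := hns q2 q1 hq2m hq1m (Ne.symm hq12) hcq2 hcq1
        rcases D2 hTc (hTd w q1 hq1m) with heq | hadj | ⟨m, hwm, hmq1⟩
        · exact absurd heq hq1m.ne
        · exact absurd hadj hns1
        rcases D2 hTc (hTd w q2 hq2m) with heq | hadj | ⟨m', hwm', hm'q2⟩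
        · exact absurd heq hq2m.ne
        · exact absurd hadj hns2
        by_cases hmc : m = c
        · exact (hTG (hmc ▸ hwm)).symm
        by_cases hm'c : m' = c
        · exact (hTG (hm'c ▸ hwm')).symm
        exfalso
        have hmm' : m ≠ m' := fun h' =>
          hmc (h22 hAc hq12 hmq1.symm (by rw [h']; exact hm'q2) hcq1.symm hcq2)
        have hmq2ne : m ≠ q2 := fun h' => hns2 (h' ▸ hwm)
        have hm'q1ne : m' ≠ q1 := fun h' => hns1 (h' ▸ hwm')
        exact h24 hAc hcq1.symm hcq2 hmq1.symm hwm.symm hwm' hm'q2 hq12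
          (Ne.symm hq1m.ne) (fun h' => hm'q1ne h'.symm) hmm' hmq2ne hq2m.ne
    · exfalso
      push_neg at hQ2
      by_cases hVs : ∀ u w : V, u = w
      · apply hnottree
        refine ⟨hconn, fun a c hc => ?_⟩
        cases c with
        | nil => exact hc.ne_nil rfl
        | cons hadj p => exact hadj.ne (hVs _ _)
      · push_neg at hVs
        obtain ⟨u, w, huw⟩ := hVs
        have hS : ∃ s, s ∈ S := by
          have hu : u ∈ Q ∪ S := hcover ▸ Set.mem_univ u
          have hw : w ∈ Q ∪ S := hcover ▸ Set.mem_univ w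
          rcases hu with hu | hu
          · rcases hw with hw | hw
            · exact absurd (hQ2 u hu w hw) huw
            · exact ⟨w, hw⟩
          · exact ⟨u, hu⟩
        obtain ⟨s, hs⟩ := hS
        have hle : G.degree s ≤ 1 := by
          rw [← card_neighborFinset_eq_degree]
          refine Finset.card_le_one.mpr ?_
          intro a ha b hb
          rw [mem_neighborFinset] at ha hb
          have haQ : a ∈ Q := by
            have : a ∈ Q ∪ S := hcover ▸ Set.mem_univ a
            rcases this with h' | h'
            · exact h'
            · exact absurd ha (hindep s hs a h')
          have hbQ : b ∈ Q := by
            have : b ∈ Q ∪ S := hcover ▸ Set.mem_univ b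
            rcases this with h' | h'
            · exact h'
            · exact absurd hb (hindep s hs b h')
          exact hQ2 a haQ b hbQ
        exact absurd (hdeg s hs) (by omega)
  · rintro ⟨v, hv⟩
    haveI : Nonempty V := hconn.nonempty
    have hle : starG v ≤ G := by
      rintro a b (⟨rfl, h2⟩ | ⟨rfl, h2⟩)
      · exact hv b h2
      · exact (hv a h2).symm
    have hdist : ∀ a, (starG v).dist a v ≤ 1 := by
      intro a
      by_cases ha : a = v
      · subst ha; simp [SimpleGraph.dist_self]
      · exact le_of_eq (dist_eq_one_iff_adj.mpr (Or.inr ⟨rfl, ha⟩))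
    have htree : (starG v).IsTree := ⟨starG_connected v, starG_acyclic v⟩
    have hmem2 : (2:ℕ) ∈ {t | 1 ≤ t ∧ ∃ T : SimpleGraph V, IsTreeSpanner G T t} := by
      refine ⟨one_le_two, starG v, hle, htree, fun a b hab => ?_⟩
      calc (starG v).dist a b ≤ (starG v).dist a v + (starG v).dist v b :=
            (starG_connected v).dist_triangle
        _ ≤ 1 + 1 := add_le_add (hdist a) (by rw [SimpleGraph.dist_comm]; exact hdist b)
        _ = 2 := rfl
    have hlb : ∀ t ∈ {t | 1 ≤ t ∧ ∃ T : SimpleGraph V, IsTreeSpanner G T t}, 2 ≤ t := by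
      rintro t ⟨ht1, T', hT'G, hT'tree, hT'd⟩
      by_contra hlt
      have ht : t = 1 := by omega
      subst ht
      apply hnottree
      have hGT : G = T' := by
        apply le_antisymm _ hT'G
        intro a b hab
        have h1 : T'.dist a b ≤ 1 := hT'd a b hab
        have h0 : 0 < T'.dist a b := hT'tree.isConnected.pos_dist_of_ne hab.ne
        exact dist_eq_one_iff_adj.mp (by omega)
      exact hGT ▸ hT'tree
    unfold stretchIndex
    exact IsLeast.csInf_eq ⟨hmem2, hlb⟩
end

section
/- Every connected split graph is 3-admissible, i.e., admits a spanning tree in which any two vertices adjacent in G are at distance at most 3 in the tree. -/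
open SimpleGraph

/-- Every connected split graph is 3-admissible. -/
theorem stmt_8 {V : Type*} [Fintype V] (G : SimpleGraph V)
    (hconn : G.Connected) (Q S : Set V)
    (hdisj : Disjoint Q S) (hcover : Q ∪ S = Set.univ)
    (hclique : G.IsClique Q)
    (hindep : ∀ u ∈ S, ∀ v ∈ S, ¬ G.Adj u v) :
    ∃ T : SimpleGraph V, IsTreeSpanner G T 3 := by
  classical
  by_cases hsub : Subsingleton V
  · refine ⟨⊥, bot_le, ⟨?_, ?_⟩, ?_⟩
    · rw [SimpleGraph.connected_iff]
      exact ⟨fun u v => by rw [Subsingleton.elim u v], hconn.nonempty⟩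
    · intro v c hc
      cases c with
      | nil => exact hc.ne_nil rfl
      | cons h _ => exact h.elim
    · intro u v huv
      exact absurd (Subsingleton.elim u v) huv.ne
  · rw [not_subsingleton_iff_nontrivial] at hsub
    have hmemS : ∀ v : V, v ∉ Q → v ∈ S := by
      intro v hv
      have hu : v ∈ Q ∪ S := by rw [hcover]; exact Set.mem_univ v
      rcases hu with h | h
      · exact absurd h hv
      · exact h
    have hnbr : ∀ v : V, ∃ w, G.Adj v w := by
      intro v
      obtain ⟨w, hw⟩ := exists_ne v
      obtain ⟨p⟩ := hconn v w
      cases p with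
      | nil => exact absurd rfl hw
      | cons h _ => exact ⟨_, h⟩
    have hSnbrQ : ∀ v : V, v ∈ S → ∃ w, G.Adj v w ∧ w ∈ Q := by
      intro v hv
      obtain ⟨w, hw⟩ := hnbr v
      refine ⟨w, hw, ?_⟩
      by_contra hwQ
      exact hindep v hv w (hmemS w hwQ) hw
    have hQne : ∃ q, q ∈ Q := by
      obtain ⟨v⟩ := hconn.nonempty
      by_cases hv : v ∈ Q
      · exact ⟨v, hv⟩
      · obtain ⟨w, _, hwQ⟩ := hSnbrQ v (hmemS v hv)
        exact ⟨w, hwQ⟩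
    obtain ⟨q0, hq0⟩ := hQne
    set f : V → V := fun v =>
      if hv : v ∈ Q then q0 else Classical.choose (hSnbrQ v (hmemS v hv)) with hf
    have hfQmem : ∀ v : V, f v ∈ Q := by
      intro v
      by_cases hv : v ∈ Q
      · simp [hf, hv, hq0]
      · simp only [hf, dif_neg hv]
        exact (Classical.choose_spec (hSnbrQ v (hmemS v hv))).2
    have hfq0 : ∀ v ∈ Q, f v = q0 := by
      intro v hv; simp [hf, hv]
    have hfadjS : ∀ v : V, v ∉ Q → G.Adj v (f v) := by
      intro v hv
      simp only [hf, dif_neg hv]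
      exact (Classical.choose_spec (hSnbrQ v (hmemS v hv))).1
    have hfadj : ∀ v : V, v ≠ q0 → G.Adj v (f v) := by
      intro v hv
      by_cases hvQ : v ∈ Q
      · rw [hfq0 v hvQ]
        exact hclique hvQ hq0 hv
      · exact hfadjS v hvQ
    set T : SimpleGraph V := SimpleGraph.fromRel (fun u v => u ≠ q0 ∧ f u = v) with hT
    have hTadj : ∀ u v : V, T.Adj u v ↔
        u ≠ v ∧ ((u ≠ q0 ∧ f u = v) ∨ (v ≠ q0 ∧ f v = u)) := by
      intro u v; rw [hT]; exact SimpleGraph.fromRel_adj _ u v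
    have hTG : T ≤ G := by
      intro u v huv
      rw [hTadj] at huv
      rcases huv with ⟨hne, ⟨hu, hfu⟩ | ⟨hv, hfv⟩⟩
      · exact hfu ▸ hfadj u hu
      · exact (hfv ▸ hfadj v hv).symm
    have hreach : ∀ v : V, ∃ p : T.Walk v q0, p.length ≤ 2 := by
      intro v
      by_cases hv : v = q0
      · subst hv; exact ⟨SimpleGraph.Walk.nil, by simp⟩
      · by_cases hfv : f v = q0
        · have a1 : T.Adj v q0 := by
            rw [hTadj]; exact ⟨hv, Or.inl ⟨hv, hfv⟩⟩
          exact ⟨SimpleGraph.Walk.cons a1 SimpleGraph.Walk.nil, by simp⟩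
        · have a1 : T.Adj v (f v) := by
            rw [hTadj]; exact ⟨(hfadj v hv).ne, Or.inl ⟨hv, rfl⟩⟩
          have a2 : T.Adj (f v) q0 := by
            rw [hTadj]; exact ⟨hfv, Or.inl ⟨hfv, hfq0 _ (hfQmem v)⟩⟩
          exact ⟨SimpleGraph.Walk.cons a1 (SimpleGraph.Walk.cons a2 SimpleGraph.Walk.nil),
            by simp⟩
    have hTconn : T.Connected := by
      rw [connected_iff]
      refine ⟨fun u v => ?_, hconn.nonempty⟩
      obtain ⟨p, _⟩ := hreach u
      obtain ⟨q, _⟩ := hreach v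
      exact ⟨p.append q.reverse⟩
    set hgt : V → ℕ := fun v => if v = q0 then 0 else if v ∈ Q then 1 else 2 with hhgt
    have hkey : ∀ u w : V, T.Adj u w → hgt w ≤ hgt u → w = f u := by
      intro u w hadj hle
      rw [hTadj] at hadj
      obtain ⟨hne, hcase⟩ := hadj
      rcases hcase with ⟨hu, hfu⟩ | ⟨hw, hfw⟩
      · exact hfu.symm
      · have huQ : u ∈ Q := hfw ▸ hfQmem w
        by_cases hu : u = q0
        · exfalso
          subst hu
          have h0 : hgt w = 0 := Nat.le_antisymm (by simpa [hhgt] using hle) (Nat.zero_le _)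
          by_cases hwQ : w ∈ Q <;> simp [hhgt, hw, hwQ] at h0
        · by_cases hwQ : w ∈ Q
          · exact absurd ((hfq0 w hwQ).symm.trans hfw) (Ne.symm hu)
          · exfalso
            simp [hhgt, hu, huQ, hw, hwQ] at hle
    have hacyc : T.IsAcyclic := by
      intro v c hc
      have hsupne : c.support.toFinset.Nonempty := ⟨v, by simp⟩
      obtain ⟨u, hus, hmax⟩ := Finset.exists_max_image c.support.toFinset hgt hsupne
      rw [List.mem_toFinset] at hus
      have hmax' : ∀ w ∈ c.support, hgt w ≤ hgt u := fun w hw =>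
        hmax w (List.mem_toFinset.2 hw)
      have main : ∀ (c'' : T.Walk u u), c''.IsCycle →
          (∀ w ∈ c''.support, hgt w ≤ hgt u) → False := by
        intro c'' hcyc hsup
        cases c'' with
        | nil => exact hcyc.ne_nil rfl
        | cons hadj p =>
          rename_i b
          have hb : b ∈ (SimpleGraph.Walk.cons hadj p).support := by
            simp [SimpleGraph.Walk.support_cons]
          obtain ⟨x, q, h', hc2⟩ := SimpleGraph.Walk.exists_cons_eq_concat hadj p
          have hx : x ∈ (SimpleGraph.Walk.cons hadj p).support := by
            rw [hc2, SimpleGraph.Walk.support_concat]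
            exact List.mem_append_left _ q.end_mem_support
          have hbu : b = f u := hkey u b hadj (hsup b hb)
          have hxu : x = f u := hkey u x h'.symm (hsup x hx)
          have hbx : x = b := hxu.trans hbu.symm
          subst hbx
          cases q with
          | nil => exact h'.ne rfl
          | cons hq q' =>
            have hed : s(u, x) :: p.edges = ((SimpleGraph.Walk.cons hq q').concat h').edges := by
              rw [← hc2]; simp
            rw [SimpleGraph.Walk.edges_concat] at hed
            have hqe : (SimpleGraph.Walk.cons hq q').edges ≠ [] := by simp
            have hpe : p.edges = (SimpleGraph.Walk.cons hq q').edges.tail ++ [s(x, u)] := by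
              have ht := congrArg List.tail hed
              simpa [List.tail_append_of_ne_nil hqe] using ht
            have hnodup := hcyc.isCircuit.isTrail.edges_nodup
            simp only [SimpleGraph.Walk.edges_cons, List.nodup_cons] at hnodup
            apply hnodup.1
            rw [hpe]
            exact List.mem_append_right _ (by simp [Sym2.eq_swap])
      have hsupp : ∀ w ∈ (c.rotate u hus).support, hgt w ≤ hgt u := by
        intro w hw
        rw [(c.rotate u hus).support_eq_cons] at hw
        rcases List.mem_cons.1 hw with rfl | hw
        · exact le_refl _
        · have hw' : w ∈ c.support.tail :=
            ((SimpleGraph.Walk.support_rotate c u hus).perm.mem_iff).1 hw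
          exact hmax' w (List.mem_of_mem_tail hw')
      exact main (c.rotate u hus) (hc.rotate hus) hsupp
    have hdist2 : ∀ v : V, T.dist v q0 ≤ 2 := by
      intro v
      obtain ⟨p, hp⟩ := hreach v
      exact le_trans (SimpleGraph.dist_le p) hp
    have hdist1 : ∀ v ∈ Q, T.dist v q0 ≤ 1 := by
      intro v hv
      by_cases hveq : v = q0
      · subst hveq; simp [SimpleGraph.dist_self]
      · have a1 : T.Adj v q0 := by
          rw [hTadj]; exact ⟨hveq, Or.inl ⟨hveq, hfq0 v hv⟩⟩
        exact le_trans (SimpleGraph.dist_le (SimpleGraph.Walk.cons a1 SimpleGraph.Walk.nil))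
          (by simp)
    refine ⟨T, hTG, ⟨hTconn, hacyc⟩, ?_⟩
    intro u v huv
    by_cases huQ : u ∈ Q
    · calc T.dist u v ≤ T.dist u q0 + T.dist q0 v := hTconn.dist_triangle
        _ ≤ 1 + 2 := by
            have := hdist2 v
            rw [show T.dist q0 v = T.dist v q0 from SimpleGraph.dist_comm]
            exact Nat.add_le_add (hdist1 u huQ) this
        _ = 3 := rfl
    · have hvQ : v ∈ Q := by
        by_contra hvQ
        exact hindep u (hmemS u huQ) v (hmemS v hvQ) huv
      rw [SimpleGraph.dist_comm]
      calc T.dist v u ≤ T.dist v q0 + T.dist q0 u := hTconn.dist_triangle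
        _ ≤ 1 + 2 := by
            have := hdist2 u
            rw [show T.dist q0 u = T.dist u q0 from SimpleGraph.dist_comm]
            exact Nat.add_le_add (hdist1 v hvQ) this
        _ = 3 := rfl
end

section
/- Let n be odd, and let H* be the graph on n vertices formed by a clique Q on n − 1 vertices together with a vertex s adjacent to exactly (n−1)/2 vertices of Q. Fix a proper edge coloring of H* with Δ = n − 1 colors. Then each vertex of Q not adjacent to s misses exactly one color, and these missing colors are mutually distinct; moreover, each color used on the (n−1)/2 edges incident to s is the missing color of exactly one vertex of Q not adjacent to s. -/
lemma aux_even {α : Type*} [DecidableEq α] (t : Finset α) (f : α → α)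
    (hmem : ∀ a ∈ t, f a ∈ t) (hinv : ∀ a ∈ t, f (f a) = a)
    (hne : ∀ a ∈ t, f a ≠ a) : Even t.card := by
  induction t using Finset.strongInduction with
  | _ t ih =>
    rcases t.eq_empty_or_nonempty with rfl | ⟨a, ha⟩
    · simp
    · have hfa : f a ∈ t := hmem a ha
      have hfa' : f a ≠ a := hne a ha
      set t' : Finset α := (t.erase a).erase (f a) with ht'
      have hsub : t' ⊂ t := by
        refine Finset.ssubset_of_subset_of_ssubset ?_ (Finset.erase_ssubset ha)
        exact Finset.erase_subset _ _
      have hmem' : ∀ b ∈ t', b ∈ t ∧ b ≠ a ∧ b ≠ f a := by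
        intro b hb
        simp only [ht', Finset.mem_erase] at hb
        exact ⟨hb.2.2, hb.2.1, hb.1⟩
      have hstep : Even t'.card := by
        refine ih t' hsub (fun b hb => ?_) (fun b hb => hinv b (hmem' b hb).1)
          (fun b hb => hne b (hmem' b hb).1)
        obtain ⟨hbt, hba, hbfa⟩ := hmem' b hb
        simp only [ht', Finset.mem_erase]
        refine ⟨?_, ?_, hmem b hbt⟩
        · intro h; exact hba (by rw [← hinv b hbt, h, hinv a ha])
        · intro h; exact hbfa (by rw [← hinv b hbt, h])
      have hcard : t.card = t'.card + 2 := by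
        rw [ht', Finset.card_erase_of_mem, Finset.card_erase_of_mem ha]
        · have h2 : 2 ≤ t.card := by
            have := Finset.one_lt_card.mpr ⟨a, ha, f a, hfa, fun h => hfa' h.symm⟩
            omega
          omega
        · exact Finset.mem_erase.mpr ⟨hfa', hfa⟩
      rw [hcard]
      exact hstep.add (even_two)

/-- `v` misses color `k`. -/
def MissC {V α : Type*} (H : SimpleGraph V) (c : Sym2 V → α) (v : V) (k : α) : Prop :=
  ∀ e ∈ H.edgeSet, v ∈ e → c e ≠ k

lemma missC_iff {V α : Type*} (H : SimpleGraph V) (c : Sym2 V → α) (v : V) (k : α) :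
    MissC H c v k ↔ ∀ w, H.Adj v w → c s(v, w) ≠ k := by
  constructor
  · intro h w hw
    exact h _ (H.mem_edgeSet.mpr hw) (Sym2.mem_mk_left _ _)
  · intro h e he hv
    induction e with
    | _ a b =>
      rw [SimpleGraph.mem_edgeSet] at he
      rcases Sym2.mem_iff.mp hv with rfl | rfl
      · exact h b he
      · rw [Sym2.eq_swap]
        exact h a he.symm

/-- In a proper `(n-1)`-edge-coloring of the saturated graph `H*` (clique on `n - 1`
vertices plus `s` joined to `(n-1)/2` clique vertices, `n` odd), each clique vertex not
adjacent to `s` misses exactly one color, these missing colors are mutually distinct, and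
each color on an edge at `s` is the missing color of exactly one such vertex. -/
theorem stmt_12 {V : Type*} [Fintype V] (n : ℕ) (hodd : Odd n) (hn : 3 ≤ n)
    (hcard : Fintype.card V = n) (s : V) (A : Set V) (hA : A ⊆ {s}ᶜ)
    (hAcard : A.ncard = (n - 1) / 2) (H : SimpleGraph V)
    (hadj : ∀ u v : V, H.Adj u v ↔
      (u ≠ v ∧ u ≠ s ∧ v ≠ s) ∨ (u = s ∧ v ∈ A) ∨ (v = s ∧ u ∈ A))
    (c : Sym2 V → Fin (n - 1)) (hc : IsProperEdgeColoring H c) :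
    (∀ q : V, q ≠ s → q ∉ A →
      ∃! k : Fin (n - 1), ∀ e ∈ H.edgeSet, q ∈ e → c e ≠ k) ∧
    (∀ q q' : V, q ≠ s → q ∉ A → q' ≠ s → q' ∉ A → q ≠ q' →
      ∀ k : Fin (n - 1), (∀ e ∈ H.edgeSet, q ∈ e → c e ≠ k) →
        ¬ (∀ e ∈ H.edgeSet, q' ∈ e → c e ≠ k)) ∧
    (∀ e ∈ H.edgeSet, s ∈ e →
      ∃! q : V, q ≠ s ∧ q ∉ A ∧ ∀ e' ∈ H.edgeSet, q ∈ e' → c e' ≠ c e) := by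
  classical
  have hsA : s ∉ A := fun h => (hA h) rfl
  obtain ⟨m, hm⟩ := hodd
  -- uniqueness of the like-colored neighbor
  have huniq : ∀ v w w' : V, H.Adj v w → H.Adj v w' → c s(v, w) = c s(v, w') → w = w' := by
    intro v w w' hw hw' hcc
    by_contra hne
    have hedne : s(v, w) ≠ s(v, w') := by
      intro heq
      rcases Sym2.eq_iff.mp heq with ⟨-, h⟩ | ⟨h1, h2⟩
      · exact hne h
      · subst h1; exact H.irrefl hw'
    exact hc _ (H.mem_edgeSet.mpr hw) _ (H.mem_edgeSet.mpr hw') hedne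
      ⟨v, Sym2.mem_mk_left _ _, Sym2.mem_mk_left _ _⟩ hcc
  -- number of missed colors at each vertex
  have hcount : ∀ v : V, (Finset.univ.filter (fun k => MissC H c v k)).card
      = (n - 1) - H.degree v := by
    intro v
    have himg : ∀ k : Fin (n-1), MissC H c v k ↔
        k ∉ (H.neighborFinset v).image (fun w => c s(v, w)) := by
      intro k
      rw [missC_iff]
      simp only [Finset.mem_image, SimpleGraph.mem_neighborFinset, not_exists, not_and]
    have heq : Finset.univ.filter (fun k => MissC H c v k)
        = Finset.univ \ (H.neighborFinset v).image (fun w => c s(v, w)) := by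
      ext k
      simp [himg k]
    have hinjon : Set.InjOn (fun w => c s(v, w)) (H.neighborFinset v) := by
      intro w hw w' hw' hcc
      exact huniq v w w' (by simpa using hw) (by simpa using hw') hcc
    rw [heq, Finset.card_sdiff_of_subset (Finset.subset_univ _), Finset.card_univ, Fintype.card_fin,
      Finset.card_image_of_injOn hinjon, SimpleGraph.degree]
  -- degrees
  have hdegs : H.degree s = (n - 1) / 2 := by
    have : H.neighborFinset s = A.toFinset := by
      ext w
      rw [SimpleGraph.mem_neighborFinset, hadj, Set.mem_toFinset]
      constructor
      · rintro ((⟨_, h, _⟩) | ⟨_, h⟩ | ⟨rfl, h⟩)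
        · exact absurd rfl h
        · exact h
        · exact absurd h hsA
      · intro h; exact Or.inr (Or.inl ⟨rfl, h⟩)
    rw [SimpleGraph.degree, this, ← Set.ncard_eq_toFinset_card', hAcard]
  have hdegA : ∀ a ∈ A, H.degree a = n - 1 := by
    intro a haA
    have has : a ≠ s := fun h => hsA (h ▸ haA)
    have : H.neighborFinset a = Finset.univ.erase a := by
      ext w
      simp only [SimpleGraph.mem_neighborFinset, hadj, Finset.mem_erase, Finset.mem_univ,
        and_true]
      constructor
      · rintro ((⟨h, _, _⟩) | ⟨h, _⟩ | ⟨rfl, _⟩)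
        · exact fun hh => h hh.symm
        · exact absurd h has
        · exact fun h => has h.symm
      · intro hwa
        by_cases hws : w = s
        · exact Or.inr (Or.inr ⟨hws, haA⟩)
        · exact Or.inl ⟨fun h => hwa h.symm, has, hws⟩
    rw [SimpleGraph.degree, this, Finset.card_erase_of_mem (Finset.mem_univ a),
      Finset.card_univ, hcard]
  have hdegQ : ∀ q : V, q ≠ s → q ∉ A → H.degree q = n - 2 := by
    intro q hqs hqA
    have : H.neighborFinset q = (Finset.univ.erase s).erase q := by
      ext w
      simp only [SimpleGraph.mem_neighborFinset, hadj, Finset.mem_erase, Finset.mem_univ,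
        and_true]
      constructor
      · rintro ((⟨h1, _, h3⟩) | ⟨h, _⟩ | ⟨_, h⟩)
        · exact ⟨fun h => h1 h.symm, h3⟩
        · exact absurd h hqs
        · exact absurd h hqA
      · rintro ⟨hwq, hws⟩
        exact Or.inl ⟨fun h => hwq h.symm, hqs, hws⟩
    rw [SimpleGraph.degree, this, Finset.card_erase_of_mem
      (Finset.mem_erase.mpr ⟨hqs, Finset.mem_univ q⟩),
      Finset.card_erase_of_mem (Finset.mem_univ s), Finset.card_univ, hcard]
    omega
  -- every color is missed by at least one vertex
  have hmiss_ex : ∀ k : Fin (n - 1), ∃ v, MissC H c v k := by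
    intro k
    set Cov : Finset V := Finset.univ.filter (fun v => ¬ MissC H c v k) with hCov
    have hcov_iff : ∀ v, v ∈ Cov ↔ ∃ w, H.Adj v w ∧ c s(v, w) = k := by
      intro v
      rw [hCov, Finset.mem_filter, missC_iff]
      push_neg
      simp
    set f : V → V := fun v => if h : ∃ w, H.Adj v w ∧ c s(v, w) = k then h.choose else v
      with hf
    have hfspec : ∀ v ∈ Cov, H.Adj v (f v) ∧ c s(v, f v) = k := by
      intro v hv
      obtain h := (hcov_iff v).mp hv
      rw [hf]; simp only [dif_pos h]
      exact h.choose_spec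
    have hfmem : ∀ v ∈ Cov, f v ∈ Cov := by
      intro v hv
      obtain ⟨hadj', hcol⟩ := hfspec v hv
      exact (hcov_iff _).mpr ⟨v, hadj'.symm, by rwa [Sym2.eq_swap]⟩
    have hfinv : ∀ v ∈ Cov, f (f v) = v := by
      intro v hv
      obtain ⟨hadj', hcol⟩ := hfspec v hv
      obtain ⟨hadj'', hcol'⟩ := hfspec (f v) (hfmem v hv)
      refine huniq (f v) (f (f v)) v hadj'' hadj'.symm ?_
      rw [hcol', Sym2.eq_swap, hcol]
    have hfne : ∀ v ∈ Cov, f v ≠ v := by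
      intro v hv h
      exact H.irrefl (h ▸ (hfspec v hv).1)
    have heven : Even Cov.card := aux_even Cov f hfmem hfinv hfne
    by_contra hno
    push_neg at hno
    have : Cov = Finset.univ := Finset.eq_univ_iff_forall.mpr
      (fun v => Finset.mem_filter.mpr ⟨Finset.mem_univ v, hno v⟩)
    rw [this, Finset.card_univ, hcard] at heven
    obtain ⟨t, ht⟩ := heven
    omega
  -- double counting
  have hswap : ∑ k : Fin (n - 1), (Finset.univ.filter (fun v => MissC H c v k)).card
      = ∑ v : V, (Finset.univ.filter (fun k : Fin (n - 1) => MissC H c v k)).card := by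
    simp only [Finset.card_filter]
    exact Finset.sum_comm
  have hsum_val : ∑ v : V, (Finset.univ.filter (fun k : Fin (n - 1) => MissC H c v k)).card
      = n - 1 := by
    have hterm : ∀ v : V,
        (Finset.univ.filter (fun k : Fin (n - 1) => MissC H c v k)).card
        = if v = s then (n - 1) / 2 else if v ∈ A then 0 else 1 := by
      intro v
      rw [hcount v]
      by_cases hvs : v = s
      · subst hvs; rw [if_pos rfl, hdegs]; omega
      · rw [if_neg hvs]
        by_cases hvA : v ∈ A
        · rw [if_pos hvA, hdegA v hvA]; omega
        · rw [if_neg hvA, hdegQ v hvs hvA]; omega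
    rw [Finset.sum_congr rfl (fun v _ => hterm v)]
    rw [← Finset.add_sum_erase _ _ (Finset.mem_univ s), if_pos rfl]
    have : ∀ v ∈ Finset.univ.erase s,
        (if v = s then (n - 1) / 2 else if v ∈ A then 0 else 1)
        = if v ∈ A then 0 else 1 := by
      intro v hv
      rw [if_neg (Finset.mem_erase.mp hv).1]
    rw [Finset.sum_congr rfl this]
    have hsplit : ∑ v ∈ Finset.univ.erase s, (if v ∈ A then 0 else 1)
        = ((Finset.univ.erase s).filter (fun v => v ∉ A)).card := by
      rw [Finset.card_filter]
      apply Finset.sum_congr rfl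
      intro v _
      by_cases hvA : v ∈ A <;> simp [hvA]
    rw [hsplit]
    have hAsub : A.toFinset ⊆ Finset.univ.erase s := by
      intro a haA
      rw [Set.mem_toFinset] at haA
      exact Finset.mem_erase.mpr ⟨fun h => hsA (h ▸ haA), Finset.mem_univ a⟩
    have hfilter_eq : (Finset.univ.erase s).filter (fun v => v ∉ A)
        = Finset.univ.erase s \ A.toFinset := by
      ext v
      simp [Finset.mem_filter, Finset.mem_sdiff, Set.mem_toFinset]
    rw [hfilter_eq, Finset.card_sdiff_of_subset hAsub, ← Set.ncard_eq_toFinset_card', hAcard,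
      Finset.card_erase_of_mem (Finset.mem_univ s), Finset.card_univ, hcard]
    omega
  -- every color is missed by exactly one vertex
  have hone : ∀ k : Fin (n - 1), (Finset.univ.filter (fun v => MissC H c v k)).card = 1 := by
    have hle : ∀ k : Fin (n - 1), (1 : ℕ) ≤ (Finset.univ.filter (fun v => MissC H c v k)).card := by
      intro k
      obtain ⟨v, hv⟩ := hmiss_ex k
      exact Finset.card_pos.mpr ⟨v, Finset.mem_filter.mpr ⟨Finset.mem_univ v, hv⟩⟩
    have hsum1 : ∑ k : Fin (n - 1), (1 : ℕ)
        = ∑ k : Fin (n - 1), (Finset.univ.filter (fun v => MissC H c v k)).card := by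
      rw [hswap, hsum_val]
      simp
    have := (Finset.sum_eq_sum_iff_of_le (fun k _ => hle k)).mp hsum1
    intro k
    exact (this k (Finset.mem_univ k)).symm
  refine ⟨?_, ?_, ?_⟩
  · intro q hqs hqA
    have h1 : (Finset.univ.filter (fun k : Fin (n - 1) => MissC H c q k)).card = 1 := by
      rw [hcount q, hdegQ q hqs hqA]; omega
    obtain ⟨k, hk⟩ := Finset.card_eq_one.mp h1
    refine ⟨k, ?_, ?_⟩
    · have : k ∈ Finset.univ.filter (fun k : Fin (n - 1) => MissC H c q k) := by
        rw [hk]; exact Finset.mem_singleton_self k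
      exact (Finset.mem_filter.mp this).2
    · intro k' hk'
      have : k' ∈ Finset.univ.filter (fun k : Fin (n - 1) => MissC H c q k) :=
        Finset.mem_filter.mpr ⟨Finset.mem_univ k', hk'⟩
      rw [hk] at this
      exact Finset.mem_singleton.mp this
  · intro q q' hqs hqA hq's hq'A hne k hq hq'
    have h1 := hone k
    have hmem1 : q ∈ Finset.univ.filter (fun v => MissC H c v k) :=
      Finset.mem_filter.mpr ⟨Finset.mem_univ q, hq⟩
    have hmem2 : q' ∈ Finset.univ.filter (fun v => MissC H c v k) :=
      Finset.mem_filter.mpr ⟨Finset.mem_univ q', hq'⟩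
    obtain ⟨v, hv⟩ := Finset.card_eq_one.mp h1
    rw [hv, Finset.mem_singleton] at hmem1 hmem2
    exact hne (hmem1.trans hmem2.symm)
  · intro e he hse
    obtain ⟨v, hv⟩ := Finset.card_eq_one.mp (hone (c e))
    have hvmiss : MissC H c v (c e) := by
      have : v ∈ Finset.univ.filter (fun w => MissC H c w (c e)) := by
        rw [hv]; exact Finset.mem_singleton_self v
      exact (Finset.mem_filter.mp this).2
    have hvs : v ≠ s := by
      rintro rfl
      exact hvmiss e he hse rfl
    have hvA : v ∉ A := by
      intro hvA
      have h0 : (Finset.univ.filter (fun k : Fin (n - 1) => MissC H c v k)).card = 0 := by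
        rw [hcount v, hdegA v hvA]; omega
      have : c e ∈ Finset.univ.filter (fun k : Fin (n - 1) => MissC H c v k) :=
        Finset.mem_filter.mpr ⟨Finset.mem_univ _, hvmiss⟩
      rw [Finset.card_eq_zero.mp h0] at this
      exact absurd this (Finset.notMem_empty _)
    refine ⟨v, ⟨hvs, hvA, hvmiss⟩, ?_⟩
    rintro q' ⟨_, _, hq'⟩
    have : q' ∈ Finset.univ.filter (fun w => MissC H c w (c e)) :=
      Finset.mem_filter.mpr ⟨Finset.mem_univ q', hq'⟩
    rw [hv, Finset.mem_singleton] at this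
    exact this
end

section
/- For odd n ≥ 3, the graph on n vertices formed by a clique on n − 1 vertices plus one vertex adjacent to exactly (n−1)/2 clique vertices is not overfull, and admits a proper edge coloring with n − 1 colors (is Class 1). -/
/-- Auxiliary: construction of a proper edge coloring with `k = 2m` colors for a graph
whose edges at `s` go only into `A`, where `A, B` partition the other vertices, each of
size `m`. -/
lemma aux_coloring {V : Type*} (m k : ℕ) (hk : k = 2 * m) (hm1 : 1 ≤ m) (s : V)
    (A B : Set V) (eA : A ≃ Fin m) (eB : B ≃ Fin m)
    (hAB : ∀ a, a ∈ A → a ∉ B) (hsA : s ∉ A)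
    (hcover : ∀ v : V, v ≠ s → v ∈ A ∨ v ∈ B)
    (H : SimpleGraph V)
    (hadjS : ∀ v, H.Adj s v → v ∈ A) :
    ∃ c : Sym2 V → Fin k, IsProperEdgeColoring H c := by
  classical
  haveI : NeZero k := ⟨by omega⟩
  set F : V → ℕ := fun v =>
    if h : v ∈ A then (eA ⟨v, h⟩).val
    else if h : v ∈ B then (eB ⟨v, h⟩).val + m else 0 with hF
  have hFA : ∀ {v} (h : v ∈ A), F v = (eA ⟨v, h⟩).val := by
    intro v h; simp only [hF]; rw [dif_pos h]
  have hFB : ∀ {v} (h : v ∈ B), F v = (eB ⟨v, h⟩).val + m := by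
    intro v h
    have hvA : v ∉ A := fun h' => hAB v h' h
    simp only [hF]; rw [dif_neg hvA, dif_pos h]
  have hFlt : ∀ v, v ≠ s → F v < k := by
    intro v hv
    rcases hcover v hv with h | h
    · rw [hFA h]; have := (eA ⟨v, h⟩).isLt; omega
    · rw [hFB h]; have := (eB ⟨v, h⟩).isLt; omega
  have hFinj : ∀ u v, u ≠ s → v ≠ s → F u = F v → u = v := by
    intro u v hu hv h
    rcases hcover u hu with ha | hb <;> rcases hcover v hv with ha' | hb'
    · rw [hFA ha, hFA ha'] at h
      have := eA.injective (Fin.ext h)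
      simpa using congrArg Subtype.val this
    · rw [hFA ha, hFB hb'] at h
      have h1 := (eA ⟨u, ha⟩).isLt
      exact absurd h (by omega)
    · rw [hFB hb, hFA ha'] at h
      have h1 := (eA ⟨v, ha'⟩).isLt
      exact absurd h (by omega)
    · rw [hFB hb, hFB hb'] at h
      have hval : (eB ⟨u, hb⟩).val = (eB ⟨v, hb'⟩).val := by omega
      have := eB.injective (Fin.ext hval)
      simpa using congrArg Subtype.val this
  have hzinj : ∀ u v, u ≠ s → v ≠ s → ((F u : ZMod k) = (F v : ZMod k)) → u = v := by
    intro u v hu hv h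
    have h1 := ZMod.val_cast_of_lt (hFlt u hu)
    have h2 := ZMod.val_cast_of_lt (hFlt v hv)
    exact hFinj u v hu hv (by rw [← h1, ← h2, h])
  -- the symmetric color function
  have hqsymm : ∀ u v : V,
      (if u = s then 2 * ((F v : ZMod k)) else if v = s then 2 * ((F u : ZMod k))
        else (F u : ZMod k) + (F v : ZMod k))
      = (if v = s then 2 * ((F u : ZMod k)) else if u = s then 2 * ((F v : ZMod k))
        else (F v : ZMod k) + (F u : ZMod k)) := by
    intro u v
    by_cases h1 : u = s
    · by_cases h2 : v = s
      · rw [if_pos h1, if_pos h2, h1, h2]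
      · rw [if_pos h1, if_neg h2, if_pos h1]
    · by_cases h2 : v = s
      · rw [if_neg h1, if_pos h2, if_pos h2]
      · rw [if_neg h1, if_neg h2, if_neg h2, if_neg h1, add_comm]
  -- doubled labels of A-vertices are distinct
  have hdouble : ∀ x y, x ∈ A → y ∈ A → 2 * (F x : ZMod k) = 2 * (F y : ZMod k) → x = y := by
    intro x y hx hy h
    have hxs : x ≠ s := fun h' => hsA (h' ▸ hx)
    have hys : y ≠ s := fun h' => hsA (h' ▸ hy)
    have hFx : F x < m := by rw [hFA hx]; exact (eA ⟨x, hx⟩).isLt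
    have hFy : F y < m := by rw [hFA hy]; exact (eA ⟨y, hy⟩).isLt
    have h' : ((2 * F x : ℕ) : ZMod k) = ((2 * F y : ℕ) : ZMod k) := by
      push_cast; exact h
    have h1 := ZMod.val_cast_of_lt (n := k) (a := 2 * F x) (by omega)
    have h2 := ZMod.val_cast_of_lt (n := k) (a := 2 * F y) (by omega)
    have : 2 * F x = 2 * F y := by rw [← h1, ← h2, h']
    exact hFinj x y hxs hys (by omega)
  refine ⟨fun e => ⟨(Sym2.lift ⟨fun u v =>
      if u = s then 2 * ((F v : ZMod k)) else if v = s then 2 * ((F u : ZMod k))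
      else (F u : ZMod k) + (F v : ZMod k), hqsymm⟩ e).val, ZMod.val_lt _⟩, ?_⟩
  intro e₁ he₁ e₂ he₂ hne hshare
  obtain ⟨v, hv1, hv2⟩ := hshare
  obtain ⟨x, rfl⟩ := Sym2.mem_iff_exists.mp hv1
  obtain ⟨y, rfl⟩ := Sym2.mem_iff_exists.mp hv2
  rw [SimpleGraph.mem_edgeSet] at he₁ he₂
  have hxy : x ≠ y := fun h => hne (by rw [h])
  intro hc
  have hval := congrArg Fin.val hc
  simp only [Sym2.lift_mk] at hval
  have hQ := ZMod.val_injective k hval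
  by_cases hvs : v = s
  · subst hvs
    have hxA : x ∈ A := hadjS x he₁
    have hyA : y ∈ A := hadjS y he₂
    rw [if_pos rfl, if_pos rfl] at hQ
    exact hxy (hdouble x y hxA hyA hQ)
  · rw [if_neg hvs, if_neg hvs] at hQ
    by_cases hxs : x = s
    · have hys : y ≠ s := fun h => hxy (hxs.trans h.symm)
      rw [if_pos hxs, if_neg hys] at hQ
      have hvy : (F v : ZMod k) = (F y : ZMod k) := by
        rw [two_mul] at hQ; exact add_left_cancel hQ
      exact (H.ne_of_adj he₂) (hzinj v y hvs hys hvy)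
    · by_cases hys : y = s
      · rw [if_neg hxs, if_pos hys] at hQ
        have hvx : (F v : ZMod k) = (F x : ZMod k) := by
          rw [two_mul] at hQ; exact (add_left_cancel hQ.symm)
        exact (H.ne_of_adj he₁) (hzinj v x hvs hxs hvx)
      · rw [if_neg hxs, if_neg hys] at hQ
        exact hxy (hzinj x y hxs hys (add_left_cancel hQ))

/-- For odd `n ≥ 3`, the saturated graph (a clique on `n - 1` vertices plus one vertex
joined to exactly `(n-1)/2` clique vertices) is not overfull and is Class 1, i.e. admits
a proper edge coloring with `n - 1` colors. -/
theorem stmt_17 {V : Type*} [Fintype V] (n : ℕ) (hodd : Odd n) (hn : 3 ≤ n)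
    (hcard : Fintype.card V = n) (s : V) (A : Set V) (hA : A ⊆ {s}ᶜ)
    (hAcard : A.ncard = (n - 1) / 2) (H : SimpleGraph V)
    (hadj : ∀ u v : V, H.Adj u v ↔
      (u ≠ v ∧ u ≠ s ∧ v ≠ s) ∨ (u = s ∧ v ∈ A) ∨ (v = s ∧ u ∈ A)) :
    ¬ (H.edgeSet.ncard > (n - 1) * (n / 2)) ∧
    ∃ c : Sym2 V → Fin (n - 1), IsProperEdgeColoring H c := by
  classical
  obtain ⟨m, hm⟩ := hodd
  have hm1 : 1 ≤ m := by omega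
  set B : Set V := {s}ᶜ \ A with hBdef
  have hsA : s ∉ A := fun h => by simpa using hA h
  have hAm : A.ncard = m := by rw [hAcard]; omega
  have hNatV : Nat.card V = n := by rw [Nat.card_eq_fintype_card, hcard]
  have hCcard : ({s}ᶜ : Set V).ncard = n - 1 := by
    have h1 := Set.ncard_add_ncard_compl ({s} : Set V)
    rw [Set.ncard_singleton, hNatV] at h1
    omega
  have hBcard : B.ncard = m := by
    rw [hBdef, Set.ncard_diff hA, hCcard, hAm]; omega
  have hAs : ∀ a ∈ A, a ≠ s := fun a ha h => hsA (h ▸ ha)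
  have hBs : ∀ b ∈ B, b ≠ s := fun b hb => by
    rw [hBdef] at hb; simpa using hb.1
  have hBA : ∀ b ∈ B, b ∉ A := fun b hb => by
    rw [hBdef] at hb; exact hb.2
  have hcover : ∀ v : V, v ≠ s → v ∈ A ∨ v ∈ B := by
    intro v hv
    by_cases hvA : v ∈ A
    · exact Or.inl hvA
    · exact Or.inr (by rw [hBdef]; exact ⟨by simpa using hv, hvA⟩)
  have hadjS : ∀ v, H.Adj s v ↔ v ∈ A := by
    intro v
    rw [hadj]
    constructor
    · rintro (⟨h1, h2, h3⟩ | ⟨h1, h2⟩ | ⟨h1, h2⟩)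
      · exact absurd rfl h2
      · exact h2
      · exact absurd h2 hsA
    · intro hv
      exact Or.inr (Or.inl ⟨rfl, hv⟩)
  constructor
  · -- edge count
    have hsum := H.sum_degrees_eq_twice_card_edges
    have hs_nmem : s ∉ A.toFinset ∪ B.toFinset := by
      simp only [Finset.mem_union, Set.mem_toFinset]
      rintro (h | h)
      · exact hsA h
      · exact (hBs s h) rfl
    have hdisj : Disjoint A.toFinset B.toFinset := by
      rw [Finset.disjoint_left]
      intro a ha hb
      rw [Set.mem_toFinset] at ha hb
      exact hBA a hb ha
    have huniv : (Finset.univ : Finset V) = insert s (A.toFinset ∪ B.toFinset) := by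
      ext v
      simp only [Finset.mem_univ, true_iff, Finset.mem_insert, Finset.mem_union,
        Set.mem_toFinset]
      by_cases hv : v = s
      · exact Or.inl hv
      · exact Or.inr (hcover v hv)
    rw [huniv, Finset.sum_insert hs_nmem, Finset.sum_union hdisj] at hsum
    have hAfc : A.toFinset.card = m := by
      rw [← Set.ncard_eq_toFinset_card', hAm]
    have hBfc : B.toFinset.card = m := by
      rw [← Set.ncard_eq_toFinset_card', hBcard]
    have hdeg_s : H.degree s ≤ m := by
      have h1 : H.neighborFinset s ⊆ A.toFinset := by
        intro v hv
        rw [SimpleGraph.mem_neighborFinset] at hv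
        rw [Set.mem_toFinset]
        exact (hadjS v).mp hv
      have := Finset.card_le_card h1
      rwa [hAfc] at this
    have hsumA : ∑ v ∈ A.toFinset, H.degree v ≤ m * (n - 1) := by
      calc ∑ v ∈ A.toFinset, H.degree v ≤ A.toFinset.card • (n - 1) :=
            Finset.sum_le_card_nsmul _ _ _ (fun x _ => by
              have := H.degree_lt_card_verts x
              rw [hcard] at this
              omega)
        _ = m * (n - 1) := by rw [hAfc, smul_eq_mul]
    have hsumB : ∑ v ∈ B.toFinset, H.degree v ≤ m * (n - 2) := by
      calc ∑ v ∈ B.toFinset, H.degree v ≤ B.toFinset.card • (n - 2) :=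
            Finset.sum_le_card_nsmul _ _ _ (fun b hb => by
              rw [Set.mem_toFinset] at hb
              have hsub : H.neighborFinset b ⊆ Finset.univ \ {b, s} := by
                intro v hv
                rw [SimpleGraph.mem_neighborFinset] at hv
                simp only [Finset.mem_sdiff, Finset.mem_univ, true_and,
                  Finset.mem_insert, Finset.mem_singleton]
                push_neg
                refine ⟨fun h => (H.ne_of_adj hv) h.symm, fun h => ?_⟩
                subst h
                exact hBA b hb ((hadjS b).mp hv.symm)
              have hcardle := Finset.card_le_card hsub
              have hpair : ({b, s} : Finset V).card = 2 := by
                rw [Finset.card_insert_of_notMem (by simpa using hBs b hb),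
                  Finset.card_singleton]
              rw [Finset.card_sdiff_of_subset (Finset.subset_univ _), Finset.card_univ, hcard,
                hpair] at hcardle
              exact hcardle)
        _ = m * (n - 2) := by rw [hBfc, smul_eq_mul]
    have hEcard : H.edgeSet.ncard = H.edgeFinset.card := by
      rw [← Nat.card_coe_set_eq, Nat.card_eq_fintype_card, SimpleGraph.edgeFinset_card]
    rw [hEcard]
    have key : m + (m * (n - 1) + m * (n - 2)) = 2 * ((n - 1) * (n / 2)) := by
      have h1 : n - 1 = 2 * m := by omega
      have h3 : n / 2 = m := by omega
      obtain ⟨m', rfl⟩ : ∃ m', m = m' + 1 := ⟨m - 1, by omega⟩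
      have h2 : n - 2 = 2 * m' + 1 := by omega
      rw [h1, h2, h3]; ring
    omega
  · -- coloring
    have heA : Nat.card A = m := by rw [Nat.card_coe_set_eq, hAm]
    have heB : Nat.card B = m := by rw [Nat.card_coe_set_eq, hBcard]
    exact aux_coloring m (n - 1) (by omega) hm1 s A B
      (Finite.equivFinOfCardEq heA) (Finite.equivFinOfCardEq heB)
      (fun a ha hb => hBA a hb ha) hsA hcover H
      (fun v hv => (hadjS v).mp hv)
end
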